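/- arXiv:1910.08609 — 5 statements merged into one kernel-verified Lean document; each statement's English description precedes it below -/
import Mathlib

section
/- Let X be a Banach space, λ ∈ ℂ with Re λ > 0, n ≥ 0 an integer, and f : [0,∞) → X continuous with ‖f‖_n = sup_{t≥0} ‖f(t)‖/(1+t)^n < ∞. Then g(t) = ∫ₜ^∞ e^{λ(t−s)} f(s) ds is well defined and satisfies sup_{t≥0} ‖g(t)‖/(1+t)^n ≤ (e^{Re λ} Γ(n+1, Re λ)/(Re λ)^{n+1}) ‖f‖_n, where Γ(a,x) = ∫ₓ^∞ t^{a−1} e^{−t} dt is the upper incomplete Gamma function. -/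
open Set MeasureTheory

/-- The upper incomplete Gamma function `Γ(a, x) = ∫ₓ^∞ t^{a−1} e^{−t} dt`. -/
noncomputable def upperGamma (a x : ℝ) : ℝ :=
  ∫ t in Set.Ioi x, t ^ (a - 1) * Real.exp (-t)

lemma aux_integrable (n : ℕ) {x : ℝ} (hx : 0 < x) (a : ℝ) :
    IntegrableOn (fun s : ℝ => (1 + s) ^ n * Real.exp (-(x * s))) (Set.Ioi a) := by
  apply integrable_of_isBigO_exp_neg (half_pos hx)
  · exact ((continuous_const.add continuous_id).pow n).continuousOn.mul
      (Real.continuous_exp.comp (by fun_prop)).continuousOn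
  · apply Asymptotics.IsLittleO.isBigO
    rw [Asymptotics.isLittleO_iff_tendsto (fun s h => absurd h (Real.exp_ne_zero _))]
    have key : Filter.Tendsto (fun s : ℝ =>
        Real.exp (x / 2) * ((1 + s) ^ (n : ℝ) * Real.exp (-(x / 2) * (1 + s))))
        Filter.atTop (nhds 0) := by
      have h1 := (tendsto_rpow_mul_exp_neg_mul_atTop_nhds_zero (n : ℝ) (x / 2) (half_pos hx)).comp
        (Filter.tendsto_atTop_add_const_left Filter.atTop 1 Filter.tendsto_id)
      simpa using h1.const_mul (Real.exp (x / 2))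
    refine key.congr (fun s => ?_)
    rw [Real.rpow_natCast, mul_div_assoc, ← Real.exp_sub]
    rw [show -(x * s) - -(x / 2) * s = x / 2 + -(x / 2) * (1 + s) by ring, Real.exp_add]
    ring

lemma shift_Ioi {E : Type*} [NormedAddCommGroup E] [NormedSpace ℝ E] (F : ℝ → E) (t : ℝ) :
    ∫ s in Set.Ioi t, F s = ∫ u in Set.Ioi (0 : ℝ), F (t + u) := by
  have h := (measurePreserving_add_left (volume : Measure ℝ) t).setIntegral_preimage_emb
    (MeasurableEquiv.addLeft t).measurableEmbedding F (Set.Ioi t)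
  have hp : (fun u : ℝ => t + u) ⁻¹' Set.Ioi t = Set.Ioi 0 := by
    ext u; simp [lt_add_iff_pos_right]
  rw [← h]
  rw [hp]

lemma shift_Ioi_integrable {E : Type*} [NormedAddCommGroup E] (F : ℝ → E) (t : ℝ)
    (h : IntegrableOn F (Set.Ioi t)) :
    IntegrableOn (fun u => F (t + u)) (Set.Ioi (0 : ℝ)) := by
  have hp : (fun u : ℝ => t + u) ⁻¹' Set.Ioi t = Set.Ioi 0 := by
    ext u; simp [lt_add_iff_pos_right]
  have := (MeasurePreserving.integrableOn_comp_preimage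
    (measurePreserving_add_left (volume : Measure ℝ) t)
    (MeasurableEquiv.addLeft t).measurableEmbedding (f := F) (s := Set.Ioi t)).2 h
  simp only [Function.comp_def] at this
  rwa [hp] at this

lemma gamma_eq (n : ℕ) {x : ℝ} (hx : 0 < x) :
    ∫ u in Set.Ioi (0 : ℝ), (1 + u) ^ n * Real.exp (-(x * u)) =
      Real.exp x * upperGamma ((n : ℝ) + 1) x / x ^ (n + 1) := by
  have h1 : upperGamma ((n : ℝ) + 1) x = ∫ t in Set.Ioi x, t ^ n * Real.exp (-t) := by
    unfold upperGamma
    refine setIntegral_congr_fun measurableSet_Ioi (fun t ht => ?_)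
    rw [add_sub_cancel_right, Real.rpow_natCast]
  have h2 := integral_comp_mul_left_Ioi (fun t => t ^ n * Real.exp (-t)) 1 hx
  simp only [mul_one, smul_eq_mul] at h2
  have h2' : (∫ t in Set.Ioi x, t ^ n * Real.exp (-t))
      = x * ∫ u in Set.Ioi (1 : ℝ), (x * u) ^ n * Real.exp (-(x * u)) := by
    rw [h2]; field_simp
  have h3 : (∫ u in Set.Ioi (1 : ℝ), (x * u) ^ n * Real.exp (-(x * u)))
      = ∫ w in Set.Ioi (0 : ℝ), (x * (1 + w)) ^ n * Real.exp (-(x * (1 + w))) :=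
    shift_Ioi (fun u => (x * u) ^ n * Real.exp (-(x * u))) 1
  have h4 : (∫ w in Set.Ioi (0 : ℝ), (x * (1 + w)) ^ n * Real.exp (-(x * (1 + w))))
      = (x ^ n * Real.exp (-x)) * ∫ u in Set.Ioi (0 : ℝ), (1 + u) ^ n * Real.exp (-(x * u)) := by
    rw [← MeasureTheory.integral_const_mul]
    refine setIntegral_congr_fun measurableSet_Ioi (fun w hw => ?_)
    rw [mul_pow, show -(x * (1 + w)) = -x + -(x * w) by ring, Real.exp_add]
    ring
  have h5 : upperGamma ((n : ℝ) + 1) x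
      = x ^ (n + 1) * Real.exp (-x) * ∫ u in Set.Ioi (0 : ℝ), (1 + u) ^ n * Real.exp (-(x * u)) := by
    rw [h1, h2', h3, h4]
    ring
  rw [h5]
  rw [Real.exp_neg]
  field_simp
  simp only [mul_comm]

/-- for `Re λ > 0` and continuous `n`-bounded `f`, the function
`g(t) = ∫ₜ^∞ e^{λ(t−s)} f(s) ds` is well defined and satisfies
`sup_{t≥0} ‖g(t)‖/(1+t)^n ≤ (e^{Re λ} Γ(n+1, Re λ)/(Re λ)^{n+1}) ‖f‖ₙ`. -/
theorem convolution_nNorm_bound_pos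
    {X : Type*} [NormedAddCommGroup X] [NormedSpace ℂ X] [CompleteSpace X]
    (n : ℕ) (lam : ℂ) (hlam : 0 < lam.re) (f : ℝ → X)
    (hcont : ContinuousOn f (Set.Ici 0))
    (hbdd : BddAbove (Set.range fun t : Set.Ici (0 : ℝ) => ‖f t‖ / (1 + (t : ℝ)) ^ n)) :
    (∀ t : ℝ, 0 ≤ t →
      IntegrableOn (fun s : ℝ => Complex.exp (lam * (t - s)) • f s) (Set.Ioi t)) ∧
    (⨆ t : Set.Ici (0 : ℝ),
        ‖∫ s in Set.Ioi (t : ℝ), Complex.exp (lam * ((t : ℝ) - s)) • f s‖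
          / (1 + (t : ℝ)) ^ n) ≤
      (Real.exp lam.re * upperGamma (n + 1) lam.re / lam.re ^ (n + 1)) *
        ⨆ t : Set.Ici (0 : ℝ), ‖f t‖ / (1 + (t : ℝ)) ^ n := by
  set x := lam.re with hxdef
  haveI : Nonempty (Set.Ici (0 : ℝ)) := ⟨⟨0, Set.self_mem_Ici⟩⟩
  set M := ⨆ t : Set.Ici (0 : ℝ), ‖f t‖ / (1 + (t : ℝ)) ^ n with hMdef
  have hpow_pos : ∀ s : ℝ, 0 ≤ s → (0 : ℝ) < (1 + s) ^ n := fun s hs => by positivity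
  have hfM : ∀ s : ℝ, 0 ≤ s → ‖f s‖ ≤ M * (1 + s) ^ n := by
    intro s hs
    have h := le_ciSup hbdd (⟨s, hs⟩ : Set.Ici (0 : ℝ))
    rw [div_le_iff₀ (hpow_pos s hs)] at h
    simpa [mul_comm] using h
  have hnorm : ∀ t s : ℝ, ‖Complex.exp (lam * ((t : ℝ) - s)) • f s‖
      = Real.exp (x * (t - s)) * ‖f s‖ := by
    intro t s
    rw [norm_smul, Complex.norm_exp]
    congr 2
    simp [Complex.mul_re, Complex.sub_re, Complex.sub_im, Complex.ofReal_re, Complex.ofReal_im, hxdef]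
  -- integrability of the dominating function
  have aux2 : ∀ t a : ℝ, IntegrableOn (fun s => (1 + s) ^ n * Real.exp (x * (t - s)))
      (Set.Ioi a) := by
    intro t a
    have h0 : IntegrableOn (fun s : ℝ => Real.exp (x * t) * ((1 + s) ^ n * Real.exp (-(x * s))))
        (Set.Ioi a) := (aux_integrable n hlam a).const_mul (Real.exp (x * t))
    refine h0.congr_fun (fun s _ => ?_) measurableSet_Ioi
    rw [show x * (t - s) = x * t + -(x * s) by ring, Real.exp_add]
    ring
  have hInt : ∀ t : ℝ, 0 ≤ t →
      IntegrableOn (fun s : ℝ => Complex.exp (lam * (t - s)) • f s) (Set.Ioi t) := by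
    intro t ht
    have hmeas : AEStronglyMeasurable (fun s : ℝ => Complex.exp (lam * (t - s)) • f s)
        (volume.restrict (Set.Ioi t)) := by
      refine ContinuousOn.aestronglyMeasurable ?_ measurableSet_Ioi
      exact (Complex.continuous_exp.comp (by fun_prop)).continuousOn.smul
        (hcont.mono (fun s hs => le_trans ht (le_of_lt hs)))
    refine Integrable.mono' (((aux2 t t).const_mul M)) hmeas ?_
    filter_upwards [self_mem_ae_restrict measurableSet_Ioi] with s hs
    have hs0 : (0 : ℝ) ≤ s := le_trans ht (le_of_lt hs)
    rw [hnorm t s]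
    calc Real.exp (x * (t - s)) * ‖f s‖
        ≤ Real.exp (x * (t - s)) * (M * (1 + s) ^ n) := by
          exact mul_le_mul_of_nonneg_left (hfM s hs0) (Real.exp_nonneg _)
      _ = M * ((1 + s) ^ n * Real.exp (x * (t - s))) := by ring
  refine ⟨hInt, ?_⟩
  set I := ∫ u in Set.Ioi (0 : ℝ), (1 + u) ^ n * Real.exp (-(x * u)) with hIdef
  have hGbound : ∀ t : ℝ, 0 ≤ t →
      ‖∫ s in Set.Ioi (t : ℝ), Complex.exp (lam * ((t : ℝ) - s)) • f s‖
        ≤ M * ((1 + t) ^ n * I) := by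
    intro t ht
    have step1 : ‖∫ s in Set.Ioi (t : ℝ), Complex.exp (lam * ((t : ℝ) - s)) • f s‖
        ≤ ∫ s in Set.Ioi t, M * ((1 + s) ^ n * Real.exp (x * (t - s))) := by
      refine norm_integral_le_of_norm_le ((aux2 t t).const_mul M) ?_
      filter_upwards [self_mem_ae_restrict measurableSet_Ioi] with s hs
      have hs0 : (0 : ℝ) ≤ s := le_trans ht (le_of_lt hs)
      rw [hnorm t s]
      calc Real.exp (x * (t - s)) * ‖f s‖
          ≤ Real.exp (x * (t - s)) * (M * (1 + s) ^ n) :=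
            mul_le_mul_of_nonneg_left (hfM s hs0) (Real.exp_nonneg _)
        _ = M * ((1 + s) ^ n * Real.exp (x * (t - s))) := by ring
    have step2 : (∫ s in Set.Ioi t, (1 + s) ^ n * Real.exp (x * (t - s)))
        = ∫ u in Set.Ioi (0 : ℝ), (1 + (t + u)) ^ n * Real.exp (-(x * u)) := by
      rw [shift_Ioi (fun s => (1 + s) ^ n * Real.exp (x * (t - s))) t]
      refine setIntegral_congr_fun measurableSet_Ioi (fun u _ => ?_)
      rw [show x * (t - (t + u)) = -(x * u) by ring]
    have hshift_int : IntegrableOn (fun u => (1 + (t + u)) ^ n * Real.exp (-(x * u)))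
        (Set.Ioi (0 : ℝ)) := by
      have h0 := shift_Ioi_integrable (fun s => (1 + s) ^ n * Real.exp (x * (t - s))) t (aux2 t t)
      have h0' : IntegrableOn (fun u : ℝ => (1 + (t + u)) ^ n * Real.exp (x * (t - (t + u))))
          (Set.Ioi (0 : ℝ)) := h0
      refine h0'.congr_fun (fun u _ => ?_) measurableSet_Ioi
      dsimp only
      rw [show x * (t - (t + u)) = -(x * u) by ring]
    have step3 : (∫ u in Set.Ioi (0 : ℝ), (1 + (t + u)) ^ n * Real.exp (-(x * u)))
        ≤ (1 + t) ^ n * I := by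
      rw [hIdef, ← MeasureTheory.integral_const_mul]
      refine setIntegral_mono_on hshift_int
        ((aux_integrable n hlam 0).const_mul _) measurableSet_Ioi (fun u hu => ?_)
      have hu0 : (0 : ℝ) < u := hu
      have hb : (1 + (t + u)) ^ n ≤ ((1 + t) * (1 + u)) ^ n := by
        refine pow_le_pow_left₀ (by linarith) (by nlinarith) n
      calc (1 + (t + u)) ^ n * Real.exp (-(x * u))
          ≤ ((1 + t) * (1 + u)) ^ n * Real.exp (-(x * u)) :=
            mul_le_mul_of_nonneg_right hb (Real.exp_nonneg _)
        _ = (1 + t) ^ n * ((1 + u) ^ n * Real.exp (-(x * u))) := by rw [mul_pow]; ring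
    calc ‖∫ s in Set.Ioi (t : ℝ), Complex.exp (lam * ((t : ℝ) - s)) • f s‖
        ≤ ∫ s in Set.Ioi t, M * ((1 + s) ^ n * Real.exp (x * (t - s))) := step1
      _ = M * ∫ s in Set.Ioi t, (1 + s) ^ n * Real.exp (x * (t - s)) :=
          MeasureTheory.integral_const_mul _ _
      _ ≤ M * ((1 + t) ^ n * I) := by
          have hM0 : 0 ≤ M := le_trans (by positivity) (le_ciSup hbdd (⟨0, Set.self_mem_Ici⟩ : Set.Ici (0:ℝ)))
          refine mul_le_mul_of_nonneg_left ?_ hM0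
          rw [step2]; exact step3
  have hcoeff : (Real.exp x * upperGamma (n + 1) x / x ^ (n + 1)) = I :=
    (gamma_eq n hlam).symm
  rw [hcoeff]
  refine ciSup_le (fun t => ?_)
  obtain ⟨t, ht⟩ := t
  simp only
  rw [div_le_iff₀ (hpow_pos t ht)]
  calc ‖∫ s in Set.Ioi (t : ℝ), Complex.exp (lam * ((t : ℝ) - s)) • f s‖
      ≤ M * ((1 + t) ^ n * I) := hGbound t ht
    _ = I * M * (1 + t) ^ n := by ring
end

section
/- Let X be a Banach space, N a natural number, ξ ∈ ℝ, and f holomorphic on a punctured disk {0 < |z − iξ| < 1} with ‖f(z)‖ ≤ M/|Re z|^N for all z with Re z ≠ 0 and |Re z| < 1. If a_k = (1/2πi)∮_{|z−iξ|=r} f(z)/(z−iξ)^{k+1} dz are the Laurent coefficients of f at iξ, then for every k ∈ ℤ and 0 < r < 1: ‖∑_{j=0}^N C(N,j) r^{2N−2j} a_{k−2j}‖ ≤ 2^N M r^{N−k}. -/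
open Complex Metric

/-- if `f` is holomorphic on the punctured disk `{0 < |z − iξ| < 1}` and
satisfies `‖f(z)‖ ≤ M/|Re z|^N` for `Re z ≠ 0`, `|Re z| < 1`, then its Laurent
coefficients `aₖ` at `iξ` satisfy
`‖∑_{j=0}^N C(N,j) r^{2N−2j} a_{k−2j}‖ ≤ 2^N M r^{N−k}` for all `k ∈ ℤ`, `0 < r < 1`. -/
theorem laurent_coeff_estimate
    {X : Type*} [NormedAddCommGroup X] [NormedSpace ℂ X] [CompleteSpace X]
    (N : ℕ) (ξ M : ℝ) (f : ℂ → X) (a : ℤ → X)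
    (hf : DifferentiableOn ℂ f (Metric.ball (Complex.I * ξ) 1 \ {Complex.I * ξ}))
    (hM : ∀ z : ℂ, z.re ≠ 0 → |z.re| < 1 → ‖f z‖ ≤ M / |z.re| ^ N)
    (ha : ∀ k : ℤ, ∀ r : ℝ, 0 < r → r < 1 →
      a k = (2 * Real.pi * Complex.I)⁻¹ •
        ∮ z in C(Complex.I * ξ, r), ((z - Complex.I * ξ) ^ (-(k + 1)) : ℂ) • f z) :
    ∀ k : ℤ, ∀ r : ℝ, 0 < r → r < 1 →
      ‖∑ j ∈ Finset.range (N + 1), ((N.choose j : ℝ) * r ^ (2 * (N - j))) • a (k - 2 * j)‖ ≤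
        2 ^ N * M * r ^ ((N : ℤ) - k) := by
  intro k r hr0 hr1
  have hrne : r ≠ 0 := hr0.ne'
  set c : ℂ := Complex.I * (ξ : ℂ) with hcdef
  -- the circle is inside the punctured disk
  have hsub : sphere c r ⊆ ball c 1 \ {c} := by
    intro z hz
    rw [mem_sphere] at hz
    refine ⟨by rw [mem_ball, hz]; exact hr1, ?_⟩
    simpa using ne_of_mem_sphere (by rwa [mem_sphere]) hrne
  have hfc : ContinuousOn f (sphere c r) := hf.continuousOn.mono hsub
  have hne : ∀ z ∈ sphere c r, z - c ≠ 0 := fun z hz =>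
    sub_ne_zero.2 (ne_of_mem_sphere hz hrne)
  -- summand functions
  set G : ℕ → ℂ → X := fun j z =>
    (((N.choose j : ℝ) * r ^ (2 * (N - j)) : ℝ) : ℂ) •
      (((z - c) ^ (-(k - 2 * j + 1)) : ℂ) • f z) with hGdef
  have hGcont : ∀ j, ContinuousOn (G j) (sphere c r) := by
    intro j
    apply ContinuousOn.smul continuousOn_const
    exact (((continuousOn_id.sub continuousOn_const).zpow₀ _
      (fun z hz => Or.inl (hne z hz)))).smul hfc
  have hGint : ∀ j, CircleIntegrable (G j) c r := fun j => (hGcont j).circleIntegrable hr0.le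
  -- the combined function
  set g : ℂ → X := fun z =>
    ((((r : ℂ) ^ 2 + (z - c) ^ 2) ^ N * (z - c) ^ (-(k + 1)) : ℂ)) • f z with hgdef
  -- step 1: sum = (2πi)⁻¹ • ∮ Σ G j
  have h1 : ∀ j ∈ Finset.range (N + 1),
      ((N.choose j : ℝ) * r ^ (2 * (N - j))) • a (k - 2 * j)
        = (2 * Real.pi * Complex.I : ℂ)⁻¹ • ∮ z in C(c, r), G j z := by
    intro j _
    rw [ha (k - 2 * j) r hr0 hr1, smul_comm]
    congr 1
    rw [hGdef]
    rw [circleIntegral.integral_smul]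
    rw [Complex.coe_smul]
  have hsum : ∑ j ∈ Finset.range (N + 1),
      ((N.choose j : ℝ) * r ^ (2 * (N - j))) • a (k - 2 * j)
        = (2 * Real.pi * Complex.I : ℂ)⁻¹ • ∮ z in C(c, r), ∑ j ∈ Finset.range (N + 1), G j z := by
    rw [Finset.sum_congr rfl h1, ← Finset.smul_sum]
    congr 1
    simp only [circleIntegral]
    rw [← intervalIntegral.integral_finset_sum
      (fun j _ => (circleIntegrable_iff r).mp (hGint j))]
    simp [Finset.smul_sum]
  -- step 2: the finite sum equals g on the circle
  have h2 : Set.EqOn (fun z => ∑ j ∈ Finset.range (N + 1), G j z) g (sphere c r) := by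
    intro z hz
    have hw : z - c ≠ 0 := hne z hz
    set w : ℂ := z - c with hwdef
    simp only [hGdef, hgdef, smul_smul, ← Finset.sum_smul]
    congr 1
    have hsplit : ∀ j : ℕ, w ^ (-(k - 2 * (j : ℤ) + 1)) = (w ^ 2) ^ j * w ^ (-(k + 1)) := by
      intro j
      have : (-(k - 2 * (j : ℤ) + 1)) = ((2 * j : ℕ) : ℤ) + (-(k + 1)) := by push_cast; ring
      rw [this, zpow_add₀ hw, zpow_natCast, pow_mul]
    calc ∑ j ∈ Finset.range (N + 1),
          (((N.choose j : ℝ) * r ^ (2 * (N - j)) : ℝ) : ℂ) * w ^ (-(k - 2 * (j : ℤ) + 1))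
        = (∑ j ∈ Finset.range (N + 1),
            (w ^ 2) ^ j * ((r : ℂ) ^ 2) ^ (N - j) * (N.choose j : ℂ)) * w ^ (-(k + 1)) := by
          rw [Finset.sum_mul]
          refine Finset.sum_congr rfl fun j hj => ?_
          rw [hsplit j]
          have hjle : j ≤ N := Nat.lt_succ_iff.mp (Finset.mem_range.mp hj)
          push_cast
          rw [← pow_mul]
          ring
      _ = ((r : ℂ) ^ 2 + w ^ 2) ^ N * w ^ (-(k + 1)) := by
          rw [add_comm ((r:ℂ)^2), add_pow]
  rw [hsum, circleIntegral.integral_congr hr0.le h2]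
  -- step 3: estimate
  have hπ := Real.pi_pos
  set C0 : ℝ := 2 ^ N * M * r ^ ((N : ℤ) - k - 1) with hC0def
  have hbound : ‖∮ z in C(c, r), g z‖ ≤ 2 * Real.pi * (r * C0) := by
    rw [circleIntegral]
    have hae : ∀ᵐ θ : ℝ ∂(MeasureTheory.volume.restrict (Set.uIoc (0:ℝ) (2*Real.pi))),
        ‖deriv (circleMap c r) θ • g (circleMap c r θ)‖ ≤ r * C0 := by
      have hnull : MeasureTheory.volume {θ : ℝ | Real.cos θ = 0} = 0 := by
        refine MeasureTheory.measure_mono_null (fun θ hθ => ?_)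
          ((Set.countable_range (fun n : ℤ => (2 * (n:ℝ) + 1) * Real.pi / 2)).measure_zero _)
        obtain ⟨n, hn⟩ := Real.cos_eq_zero_iff.mp hθ
        exact ⟨n, hn.symm⟩
      have hae0 : ∀ᵐ θ : ℝ, Real.cos θ ≠ 0 := by
        rw [MeasureTheory.ae_iff]; simpa using hnull
      refine MeasureTheory.ae_restrict_of_ae (hae0.mono fun θ hθ => ?_)
      set z : ℂ := circleMap c r θ with hzdef
      set t : ℝ := |Real.cos θ| with htdef
      have ht0 : 0 < t := abs_pos.mpr hθ
      have ht1 : t ≤ 1 := Real.abs_cos_le_one θ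
      -- real part
      have hre : z.re = r * Real.cos θ := by
        simp [hzdef, circleMap, hcdef, Complex.add_re, Complex.mul_re]
      have hfz : ‖f z‖ ≤ M / (r * t) ^ N := by
        have h1' : z.re ≠ 0 := by rw [hre]; exact mul_ne_zero hrne hθ
        have h2' : |z.re| < 1 := by
          rw [hre, abs_mul, abs_of_pos hr0]
          calc r * |Real.cos θ| ≤ r * 1 := by nlinarith [Real.abs_cos_le_one θ]
            _ < 1 := by linarith
        have := hM z h1' h2'
        rwa [hre, abs_mul, abs_of_pos hr0] at this
      -- norm of z - c and of r² + (z-c)²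
      have hwnorm : ‖z - c‖ = r := by
        rw [hzdef, circleMap_sub_center]
        simpa [abs_of_pos hr0] using abs_circleMap_zero r θ
      have hA : (r : ℂ) ^ 2 + (z - c) ^ 2
          = 2 * (r : ℂ) ^ 2 * (Real.cos θ : ℂ) * Complex.exp (θ * Complex.I) := by
        have hz' : z - c = (r : ℂ) * Complex.exp (θ * Complex.I) := by
          rw [hzdef, circleMap_sub_center]; simp [circleMap]
        have he : Complex.exp (θ * Complex.I) * Complex.exp (-(θ:ℂ) * Complex.I) = 1 := by
          rw [← Complex.exp_add]; simp
        have hcos : (Real.cos θ : ℂ)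
            = (Complex.exp (θ * Complex.I) + Complex.exp (-(θ:ℂ) * Complex.I)) / 2 := by
          rw [Complex.ofReal_cos, Complex.cos]
        rw [hz', hcos]
        linear_combination (-(r : ℂ) ^ 2) * he
      have hAnorm : ‖((r : ℂ) ^ 2 + (z - c) ^ 2)‖ = 2 * r ^ 2 * t := by
        rw [hA]
        simp only [norm_mul, Complex.norm_exp_ofReal_mul_I,
          Complex.norm_real, Complex.norm_two, norm_pow, Real.norm_eq_abs]
        rw [htdef]; ring_nf; simp [abs_of_pos hr0]; ring
      -- put it together
      have hgz : ‖g z‖ ≤ (2 * r ^ 2 * t) ^ N * r ^ (-(k + 1)) * (M / (r * t) ^ N) := by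
        rw [hgdef]
        simp only [norm_smul, norm_mul, norm_pow, norm_zpow]
        rw [hwnorm, hAnorm]
        exact mul_le_mul_of_nonneg_left hfz (by positivity)
      have hderiv : ‖deriv (circleMap c r) θ‖ = r := by
        rw [deriv_circleMap]
        simp [abs_of_pos hr0]
      rw [norm_smul, hderiv]
      have hzpow : r ^ ((N : ℤ) - k - 1) = r ^ N * r ^ (-(k + 1)) := by
        rw [← zpow_natCast r N, ← zpow_add₀ hrne]
        congr 1; ring
      have hC0eq : (2 * r ^ 2 * t) ^ N * r ^ (-(k+1)) * (M / (r * t) ^ N) = C0 := by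
        rw [hC0def, hzpow, mul_pow, mul_pow, mul_pow]
        field_simp
        ring
      rw [← hC0eq]
      exact mul_le_mul_of_nonneg_left hgz hr0.le
    calc ‖∫ θ in (0:ℝ)..(2*Real.pi), deriv (circleMap c r) θ • g (circleMap c r θ)‖
        ≤ |∫ _θ in (0:ℝ)..(2*Real.pi), r * C0| :=
          intervalIntegral.norm_integral_le_abs_of_norm_le hae (intervalIntegrable_const)
      _ = |(2 * Real.pi - 0) * (r * C0)| := by rw [intervalIntegral.integral_const]; simp
      _ = 2 * Real.pi * |r * C0| := by
          rw [sub_zero, abs_mul, abs_of_pos Real.two_pi_pos]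
      _ ≤ 2 * Real.pi * (r * C0) := by
          have hre2 : (((1:ℝ)/2 : ℂ) + c).re = 1/2 := by simp [hcdef]
          have hM0 : 0 ≤ M := by
            have h3 := hM (((1:ℝ)/2 : ℂ) + c) (by rw [hre2]; norm_num)
              (by rw [hre2, _root_.abs_of_nonneg (by norm_num : (0:ℝ) ≤ 1/2)]; norm_num)
            have h4 : (0:ℝ) ≤ M / |(((1:ℝ)/2 : ℂ) + c).re| ^ N :=
              le_trans (norm_nonneg _) h3
            rw [hre2] at h4
            have h5 : (0:ℝ) < |(1:ℝ)/2| ^ N := by positivity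
            simpa using (le_div_iff₀ h5).mp h4
          have hC0nn : 0 ≤ C0 := by rw [hC0def]; positivity
          rw [_root_.abs_of_nonneg (by positivity : (0:ℝ) ≤ r * C0)]
  have hni : ‖(2 * (Real.pi : ℂ) * Complex.I)⁻¹‖ = (2 * Real.pi)⁻¹ := by
    simp [Real.pi_pos.le]
  rw [norm_smul, hni]
  have hrz : r * C0 = 2 ^ N * M * r ^ ((N : ℤ) - k) := by
    have h6 : (N : ℤ) - k = 1 + ((N : ℤ) - k - 1) := by ring
    rw [hC0def, h6, zpow_add₀ hrne, zpow_one]; ring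
  calc (2 * Real.pi)⁻¹ * ‖∮ z in C(c, r), g z‖
      ≤ (2 * Real.pi)⁻¹ * (2 * Real.pi * (r * C0)) :=
        mul_le_mul_of_nonneg_left hbound (by positivity)
    _ = r * C0 := by field_simp
    _ = 2 ^ N * M * r ^ ((N : ℤ) - k) := hrz
end

section
/- Let X be a Banach space, N = n+1 for an integer n ≥ 0, and f holomorphic on a punctured disk around iξ (ξ ∈ ℝ) satisfying ‖f(z)‖ ≤ M/|Re z|^N for 0 < |Re z| < 1. Then the Laurent coefficients a_k of f at iξ vanish for all k ≤ −(n+2); i.e., iξ is either a removable singularity or a pole of f of order at most n+1. -/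
open Complex Metric

private lemma circleIntegral_finset_sum' {E : Type*} [NormedAddCommGroup E] [NormedSpace ℂ E]
    {ι : Type*} (s : Finset ι) (g : ι → ℂ → E) (c : ℂ) (R : ℝ)
    (h : ∀ i ∈ s, CircleIntegrable (g i) c R) :
    (∮ z in C(c, R), ∑ i ∈ s, g i z) = ∑ i ∈ s, ∮ z in C(c, R), g i z := by
  simp only [circleIntegral, Finset.smul_sum]
  rw [intervalIntegral.integral_finset_sum]
  exact fun i hi => (h i hi).out

/-- if `f` is holomorphic on a punctured disk around `iξ` and satisfies
`‖f(z)‖ ≤ M/|Re z|^{n+1}` for `0 < |Re z| < 1`, then the Laurent coefficients `aₖ` of `f`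
at `iξ` vanish for all `k ≤ −(n+2)`; that is, `iξ` is a removable singularity or a pole
of order at most `n+1`. -/
theorem laurent_pole_order_le
    {X : Type*} [NormedAddCommGroup X] [NormedSpace ℂ X] [CompleteSpace X]
    (n : ℕ) (ξ M : ℝ) (f : ℂ → X) (a : ℤ → X)
    (hf : DifferentiableOn ℂ f (Metric.ball (Complex.I * ξ) 1 \ {Complex.I * ξ}))
    (hM : ∀ z : ℂ, z.re ≠ 0 → |z.re| < 1 → ‖f z‖ ≤ M / |z.re| ^ (n + 1))
    (ha : ∀ k : ℤ, ∀ r : ℝ, 0 < r → r < 1 →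
      a k = (2 * Real.pi * Complex.I)⁻¹ •
        ∮ z in C(Complex.I * ξ, r), ((z - Complex.I * ξ) ^ (-(k + 1)) : ℂ) • f z) :
    ∀ k : ℤ, k ≤ -((n : ℤ) + 2) → a k = 0 := by
  intro k hk
  set c : ℂ := Complex.I * ξ with hcdef
  have hcre : c.re = 0 := by simp [hcdef]
  have hM0 : 0 ≤ M := by
    have h := hM (1/2 : ℂ) (by norm_num) (by rw [show ((1:ℂ)/2).re = 1/2 by norm_num, _root_.abs_of_nonneg] <;> norm_num)
    have h2 : (0:ℝ) ≤ M / |((1:ℂ)/2).re| ^ (n+1) := le_trans (norm_nonneg _) h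
    have h3 : (0:ℝ) < |((1:ℂ)/2).re| ^ (n+1) := by norm_num
    have := (le_div_iff₀ h3).mp h2
    simpa using this
  obtain ⟨m, hm⟩ : ∃ m : ℕ, (m : ℤ) = -k - ((n:ℤ) + 2) :=
    ⟨(-k - ((n:ℤ)+2)).toNat, Int.toNat_of_nonneg (by omega)⟩
  -- circle integrals of (z-c)^p • f z give Laurent coefficients
  have key : ∀ (p : ℤ) (r : ℝ), 0 < r → r < 1 →
      (∮ z in C(c, r), ((z - c) ^ p : ℂ) • f z) = (2 * (Real.pi:ℂ) * Complex.I) • a (-p-1) := by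
    intro p r hr0 hr1
    have h := ha (-p-1) r hr0 hr1
    have hp : -(-p-1+1) = p := by ring
    rw [hp] at h
    rw [h, smul_smul, mul_inv_cancel₀ Complex.two_pi_I_ne_zero, one_smul]
  set B : ℝ := 2*Real.pi*(2^(n+1)*M) +
      ∑ j ∈ Finset.range (n+1),
        ((n+1).choose j : ℝ) * (2*Real.pi*‖a (-((m:ℤ) - ((n:ℤ)+1) + 2*(j:ℤ)) - 1)‖) with hB
  have main : ∀ r : ℝ, 0 < r → r < 1 → 2*Real.pi*‖a k‖ ≤ r * B := by
    intro r hr0 hr1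
    have hsub : sphere c r ⊆ Metric.ball c 1 \ {c} := by
      intro z hz
      rw [mem_sphere_iff_norm] at hz
      constructor
      · rw [Metric.mem_ball, dist_eq_norm]; rw [hz]; exact hr1
      · simp only [Set.mem_singleton_iff]
        intro h
        rw [h, sub_self, norm_zero] at hz
        exact absurd hz.symm (ne_of_gt hr0)
    have hfc : ContinuousOn f (sphere c r) := hf.continuousOn.mono hsub
    have habs : ∀ z ∈ sphere c r, ‖z - c‖ = r := by
      intro z hz; rw [mem_sphere_iff_norm] at hz; rw [hz]
    have hzc : ∀ z ∈ sphere c r, z - c ≠ 0 := by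
      intro z hz h0
      have := habs z hz
      rw [h0, norm_zero] at this
      exact absurd this.symm (ne_of_gt hr0)
    have contp : ∀ p : ℤ, ContinuousOn (fun z => ((z - c) ^ p : ℂ)) (sphere c r) := by
      intro p
      exact ContinuousOn.zpow₀ ((continuous_id.sub continuous_const).continuousOn) p
        (fun z hz => Or.inl (hzc z hz))
    have hint : ∀ p : ℤ, CircleIntegrable (fun z => ((z - c) ^ p : ℂ) • f z) c r :=
      fun p => ((contp p).smul hfc).circleIntegrable hr0.le
    set F : ℂ → X := fun z =>
      (((z - c) ^ ((m:ℤ) - ((n:ℤ)+1)) : ℂ) * ((z - c)^2 + (r:ℂ)^2)^(n+1)) • f z with hFdef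
    set T : ℕ → ℂ → X := fun j z =>
      ((((n+1).choose j : ℂ)) * (r:ℂ)^(2*(n+1-j))) •
        (((z - c) ^ ((m:ℤ) - ((n:ℤ)+1) + 2*(j:ℤ)) : ℂ) • f z) with hTdef
    have hintT : ∀ j ∈ Finset.range (n+2), CircleIntegrable (T j) c r := by
      intro j _
      exact (continuousOn_const.smul ((contp _).smul hfc)).circleIntegrable hr0.le
    have heq : Set.EqOn F (fun z => ∑ j ∈ Finset.range (n+2), T j z) (sphere c r) := by
      intro z hz
      have hw := hzc z hz
      simp only [hFdef, hTdef, smul_smul]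
      rw [← Finset.sum_smul]
      congr 1
      rw [add_pow, Finset.mul_sum]
      refine Finset.sum_congr rfl fun j hj => ?_
      rw [← pow_mul, ← pow_mul, zpow_add₀ hw,
        show ((2*(j:ℤ))) = ((2*j : ℕ) : ℤ) by push_cast; ring, zpow_natCast]
      push_cast
      ring
    have hFsum : (∮ z in C(c,r), F z) = ∑ j ∈ Finset.range (n+2),
        ((((n+1).choose j : ℂ)) * (r:ℂ)^(2*(n+1-j))) •
          ((2*(Real.pi:ℂ)*Complex.I) • a (-((m:ℤ) - ((n:ℤ)+1) + 2*(j:ℤ)) - 1)) := by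
      rw [circleIntegral.integral_congr hr0.le heq,
        circleIntegral_finset_sum' _ _ _ _ hintT]
      refine Finset.sum_congr rfl fun j hj => ?_
      rw [hTdef]
      rw [circleIntegral.integral_smul, key _ r hr0 hr1]
    set S : X := ∑ j ∈ Finset.range (n+1),
        ((((n+1).choose j : ℂ)) * (r:ℂ)^(2*(n+1-j))) •
          ((2*(Real.pi:ℂ)*Complex.I) • a (-((m:ℤ) - ((n:ℤ)+1) + 2*(j:ℤ)) - 1)) with hSdef
    have hsplit : (∮ z in C(c,r), F z) = S + (2*(Real.pi:ℂ)*Complex.I) • a k := by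
      rw [hFsum, Finset.sum_range_succ, hSdef]
      congr 1
      have h1 : (((n+1).choose (n+1) : ℂ) * (r:ℂ)^(2*(n+1-(n+1)))) = 1 := by simp
      have h2 : (-((m:ℤ) - ((n:ℤ)+1) + 2*(((n+1 : ℕ)):ℤ)) - 1) = k := by push_cast; omega
      rw [h1, h2, one_smul]
    have hak : (2*(Real.pi:ℂ)*Complex.I) • a k = (∮ z in C(c,r), F z) - S := by
      rw [hsplit]; abel
    -- pointwise bound for F on the circle
    have hFb : ∀ z ∈ sphere c r, ‖F z‖ ≤ 2^(n+1)*M*r^m := by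
      intro z hz
      have ha1 := habs z hz
      have hw := hzc z hz
      have hre : (z - c).re = z.re := by rw [Complex.sub_re, hcre, sub_zero]
      have hq : (z - c)^2 + (r:ℂ)^2 = (z - c) * ((2*z.re : ℝ) : ℂ) := by
        have h1 : (z - c) * (starRingEnd ℂ) (z - c) = (r:ℂ)^2 := by
          rw [Complex.mul_conj]; norm_cast; rw [Complex.normSq_eq_norm_sq, ha1]
        rw [← h1]
        have h3 : ((2*z.re : ℝ) : ℂ) = (z - c) + (starRingEnd ℂ) (z - c) := by
          rw [Complex.add_conj, hre]
        rw [h3]; ring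
      have hnorm : ‖F z‖ = (r:ℝ) ^ ((m:ℤ) - ((n:ℤ)+1)) * (r * |2*z.re|)^(n+1) * ‖f z‖ := by
        rw [hFdef]
        rw [norm_smul, norm_mul, norm_pow, norm_zpow, ha1, hq, norm_mul,
          Complex.norm_real, Real.norm_eq_abs, ha1]
      have he : (r:ℝ) ^ ((m:ℤ) - ((n:ℤ)+1)) = r^m / r^(n+1) := by
        rw [show (m:ℤ) - ((n:ℤ)+1) = (m:ℤ) - ((n+1:ℕ):ℤ) by push_cast; ring,
          zpow_sub₀ (ne_of_gt hr0), zpow_natCast, zpow_natCast]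
      rw [hnorm, he]
      have hrn : (0:ℝ) < r^(n+1) := pow_pos hr0 _
      by_cases hx : z.re = 0
      · rw [hx]
        simp only [mul_zero, abs_zero, zero_pow (Nat.succ_ne_zero n), zero_mul]
        positivity
      · have hxr : |z.re| ≤ r := by
          have := Complex.abs_re_le_norm (z - c)
          rw [hre, ha1] at this; exact this
        have hx1 : |z.re| < 1 := lt_of_le_of_lt hxr hr1
        have hfz := hM z hx hx1
        have hxp : (0:ℝ) < |z.re|^(n+1) := pow_pos (abs_pos.mpr hx) _
        have hfx : |z.re|^(n+1) * ‖f z‖ ≤ M := by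
          rw [mul_comm]
          exact (le_div_iff₀ hxp).mp hfz
        have hEq : r^m / r^(n+1) * (r * |2*z.re|)^(n+1) = 2^(n+1) * r^m * |z.re|^(n+1) := by
          rw [abs_mul, _root_.abs_two]
          field_simp
          ring
        rw [mul_assoc, ← mul_assoc (r^m / r^(n+1)), hEq]
        calc 2^(n+1) * r^m * |z.re|^(n+1) * ‖f z‖
            = 2^(n+1) * r^m * (|z.re|^(n+1) * ‖f z‖) := by ring
          _ ≤ 2^(n+1) * r^m * M := by
              have h2r : (0:ℝ) ≤ 2^(n+1) * r^m := by positivity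
              exact mul_le_mul_of_nonneg_left hfx h2r
          _ = 2^(n+1)*M*r^m := by ring
    have hFle : ‖∮ z in C(c,r), F z‖ ≤ 2*Real.pi*r*(2^(n+1)*M*r^m) :=
      circleIntegral.norm_integral_le_of_norm_le_const hr0.le hFb
    have h2pin : ‖(2*(Real.pi:ℂ)*Complex.I)‖ = 2*Real.pi := by
      simp only [norm_mul, Complex.norm_two, Complex.norm_I,
        Complex.norm_real, Real.norm_eq_abs, mul_one, _root_.abs_of_nonneg Real.pi_pos.le]
    have hSle : ‖S‖ ≤ r * (∑ j ∈ Finset.range (n+1),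
        ((n+1).choose j : ℝ) * (2*Real.pi*‖a (-((m:ℤ) - ((n:ℤ)+1) + 2*(j:ℤ)) - 1)‖)) := by
      rw [hSdef, Finset.mul_sum]
      refine le_trans (norm_sum_le _ _) (Finset.sum_le_sum fun j hj => ?_)
      rw [norm_smul, norm_smul, h2pin]
      have hcoef : ‖(((n+1).choose j : ℂ)) * (r:ℂ)^(2*(n+1-j))‖
          = ((n+1).choose j : ℝ) * r^(2*(n+1-j)) := by
        rw [norm_mul, norm_pow]
        simp [Complex.norm_natCast, Complex.norm_real,
          _root_.abs_of_nonneg hr0.le]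
      rw [hcoef]
      have hrle : r^(2*(n+1-j)) ≤ r := by
        have h1 : 1 ≤ 2*(n+1-j) := by
          have := Finset.mem_range.mp hj; omega
        calc r^(2*(n+1-j)) ≤ r^1 := pow_le_pow_of_le_one hr0.le hr1.le h1
          _ = r := pow_one r
      have hCP : (0:ℝ) ≤ ((n+1).choose j : ℝ) * (2*Real.pi*‖a (-((m:ℤ) - ((n:ℤ)+1) + 2*(j:ℤ)) - 1)‖) := by
        positivity
      calc ((n+1).choose j : ℝ) * r^(2*(n+1-j)) * (2*Real.pi*‖a (-((m:ℤ) - ((n:ℤ)+1) + 2*(j:ℤ)) - 1)‖)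
          = r^(2*(n+1-j)) * (((n+1).choose j : ℝ) * (2*Real.pi*‖a (-((m:ℤ) - ((n:ℤ)+1) + 2*(j:ℤ)) - 1)‖)) := by ring
        _ ≤ r * (((n+1).choose j : ℝ) * (2*Real.pi*‖a (-((m:ℤ) - ((n:ℤ)+1) + 2*(j:ℤ)) - 1)‖)) :=
            mul_le_mul_of_nonneg_right hrle hCP
    have hnak : ‖(2*(Real.pi:ℂ)*Complex.I) • a k‖ = 2*Real.pi*‖a k‖ := by
      rw [norm_smul, h2pin]
    have hrm : r^m ≤ 1 := pow_le_one₀ hr0.le hr1.le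
    have hfinal : 2*Real.pi*‖a k‖ ≤ 2*Real.pi*r*(2^(n+1)*M*r^m) + r * (∑ j ∈ Finset.range (n+1),
        ((n+1).choose j : ℝ) * (2*Real.pi*‖a (-((m:ℤ) - ((n:ℤ)+1) + 2*(j:ℤ)) - 1)‖)) := by
      rw [← hnak, hak]
      exact le_trans (norm_sub_le _ _) (add_le_add hFle hSle)
    rw [hB]
    have hstep : 2*Real.pi*r*(2^(n+1)*M*r^m) ≤ r * (2*Real.pi*(2^(n+1)*M)) := by
      have h0 : (0:ℝ) ≤ 2*Real.pi*r*(2^(n+1)*M) := by positivity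
      calc 2*Real.pi*r*(2^(n+1)*M*r^m) = (2*Real.pi*r*(2^(n+1)*M))*r^m := by ring
        _ ≤ (2*Real.pi*r*(2^(n+1)*M))*1 := mul_le_mul_of_nonneg_left hrm h0
        _ = r*(2*Real.pi*(2^(n+1)*M)) := by ring
    calc 2*Real.pi*‖a k‖ ≤ 2*Real.pi*r*(2^(n+1)*M*r^m) + r * (∑ j ∈ Finset.range (n+1),
        ((n+1).choose j : ℝ) * (2*Real.pi*‖a (-((m:ℤ) - ((n:ℤ)+1) + 2*(j:ℤ)) - 1)‖)) := hfinal
      _ ≤ r * (2*Real.pi*(2^(n+1)*M)) + r * (∑ j ∈ Finset.range (n+1),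
        ((n+1).choose j : ℝ) * (2*Real.pi*‖a (-((m:ℤ) - ((n:ℤ)+1) + 2*(j:ℤ)) - 1)‖)) := by
          exact add_le_add_left hstep _
      _ = r * (2*Real.pi*(2^(n+1)*M) + ∑ j ∈ Finset.range (n+1),
        ((n+1).choose j : ℝ) * (2*Real.pi*‖a (-((m:ℤ) - ((n:ℤ)+1) + 2*(j:ℤ)) - 1)‖)) := by ring
  -- conclude
  have hconc : ‖a k‖ ≤ 0 := by
    have ht : Filter.Tendsto (fun r : ℝ => r * (B/(2*Real.pi)))
        (nhdsWithin 0 (Set.Ioi 0)) (nhds 0) := by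
      have h1 : Filter.Tendsto (fun r : ℝ => r * (B/(2*Real.pi))) (nhds 0) (nhds (0 * (B/(2*Real.pi)))) :=
        (continuous_mul_right _).tendsto 0
      rw [zero_mul] at h1
      exact h1.mono_left nhdsWithin_le_nhds
    have hev : ∀ᶠ r in nhdsWithin (0:ℝ) (Set.Ioi 0), ‖a k‖ ≤ r * (B/(2*Real.pi)) := by
      filter_upwards [Ioo_mem_nhdsGT_of_mem (Set.mem_Ico.mpr ⟨le_refl (0:ℝ), one_pos⟩)] with r hr
      have hmain := main r hr.1 hr.2
      have h2pi := Real.two_pi_pos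
      calc ‖a k‖ = (2*Real.pi*‖a k‖) / (2*Real.pi) := by field_simp
        _ ≤ (r * B) / (2*Real.pi) := by
            gcongr
        _ = r * (B/(2*Real.pi)) := by ring
    exact ge_of_tendsto ht hev
  exact norm_le_zero_iff.mp hconc
end

section
/- Let X be a Banach space and G : B(iξ₀, r) → Y an analytic function on an open disk centered at iξ₀ ∈ iℝ that agrees with R(λ, D)x for all λ in the disk with Re λ > 0, where D is a closed operator on a Banach space Y whose resolvent set contains {Re λ ≠ 0} and x ∈ Y. Then G(λ) = R(λ, D)x for all λ in the disk with Re λ < 0 as well. -/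
open Metric Complex

/-- let `D` be a closed operator on a Banach space `Y` whose resolvent set
contains `{Re λ ≠ 0}`, with resolvent family `R`. If `G` is analytic on an open disk
`B(iξ₀, r)` and `G(λ) = R(λ)x` for all `λ` in the disk with `Re λ > 0`, then also
`G(λ) = R(λ)x` for all `λ` in the disk with `Re λ < 0`. -/
theorem resolvent_analytic_extension_agrees
    {Y : Type*} [NormedAddCommGroup Y] [NormedSpace ℂ Y] [CompleteSpace Y]
    (D : Y →ₗ[ℂ] Y) (hclosed : IsClosed {p : Y × Y | D p.1 = p.2})
    (R : ℂ → Y →L[ℂ] Y)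
    (hres : ∀ lam : ℂ, lam.re ≠ 0 → ∀ y : Y,
      lam • R lam y - D (R lam y) = y ∧ R lam (lam • y - D y) = y)
    (hRanal : DifferentiableOn ℂ (fun lam => R lam) {lam : ℂ | lam.re ≠ 0})
    (ξ₀ : ℝ) (r : ℝ) (hr : 0 < r) (x : Y) (G : ℂ → Y)
    (hG : DifferentiableOn ℂ G (Metric.ball (Complex.I * ξ₀) r))
    (hagree : ∀ lam ∈ Metric.ball (Complex.I * ξ₀) r, 0 < lam.re → G lam = R lam x) :
    ∀ lam ∈ Metric.ball (Complex.I * ξ₀) r, lam.re < 0 → G lam = R lam x := by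
  -- D is continuous by the closed graph theorem
  have hDgraph : IsClosed (D.graph : Set (Y × Y)) := by
    have : (D.graph : Set (Y × Y)) = {p : Y × Y | D p.1 = p.2} := by
      ext p; simp [LinearMap.mem_graph_iff, eq_comm]
    rw [this]; exact hclosed
  have hDcont : Continuous D := D.continuous_of_isClosed_graph hDgraph
  set c : ℂ := Complex.I * ξ₀ with hc
  -- φ(λ) = λ • G λ - D (G λ) is analytic on the ball
  set φ : ℂ → Y := fun lam => lam • G lam - D (G lam) with hφ
  have hball : IsOpen (Metric.ball c r) := Metric.isOpen_ball
  have hφdiff : DifferentiableOn ℂ φ (Metric.ball c r) := by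
    apply DifferentiableOn.sub
    · exact (differentiableOn_id.smul hG)
    · exact (⟨D, hDcont⟩ : Y →L[ℂ] Y).differentiable.comp_differentiableOn hG
  have hφanal : AnalyticOnNhd ℂ φ (Metric.ball c r) :=
    hφdiff.analyticOnNhd hball
  have hconst : AnalyticOnNhd ℂ (fun _ : ℂ => x) (Metric.ball c r) :=
    analyticOnNhd_const
  -- basepoint in the right half of the ball
  set z₀ : ℂ := c + (r / 2 : ℝ) with hz₀
  have hz₀re : 0 < z₀.re := by
    simp [hz₀, hc, Complex.add_re, Complex.mul_re]
    positivity
  have hz₀mem : z₀ ∈ Metric.ball c r := by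
    simp only [hz₀, Metric.mem_ball, dist_eq_norm, add_sub_cancel_left]
    rw [Complex.norm_real, Real.norm_eq_abs]
    rw [abs_of_pos (by positivity)]
    linarith
  -- φ = x eventually near z₀
  have hopen : IsOpen (Metric.ball c r ∩ {lam : ℂ | 0 < lam.re}) :=
    hball.inter (isOpen_lt continuous_const Complex.continuous_re)
  have hev : φ =ᶠ[nhds z₀] (fun _ => x) := by
    filter_upwards [hopen.mem_nhds ⟨hz₀mem, hz₀re⟩] with lam hlam
    obtain ⟨hmem, hpos⟩ := hlam
    have hne : lam.re ≠ 0 := ne_of_gt hpos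
    have h1 := (hres lam hne x).1
    simp only [φ, hagree lam hmem hpos]
    exact h1
  have heq : Set.EqOn φ (fun _ => x) (Metric.ball c r) :=
    hφanal.eqOn_of_preconnected_of_eventuallyEq hconst
      (convex_ball c r).isPreconnected hz₀mem hev
  intro lam hmem hneg
  have hne : lam.re ≠ 0 := ne_of_lt hneg
  have h2 := (hres lam hne (G lam)).2
  have hx : lam • G lam - D (G lam) = x := heq hmem
  rw [hx] at h2
  exact h2.symm
end

section
/- Let Y be a Banach space and D a closed operator on Y with ℂ\iℝ ⊆ ρ(D). Suppose x ∈ Y is such that λ ↦ R(λ,D)x extends analytically across every point of iℝ except a countable closed set E ⊆ iℝ, and at each isolated singular point iη the function has at worst a pole of order ≤ n+1 whose residue data satisfy lim_{α↓0} α R(α+iη, D)x = 0 making the singularity removable. If moreover ‖R(λ,D)x‖ ≤ M/|Re λ|^{n+1} near iℝ, then the singular set of the extension is empty, i.e., λ ↦ R(λ,D)x extends to an entire function. -/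
open Metric Complex Filter Topology

open Set

section AuxiliaryLemmas

variable {Y : Type*} [NormedAddCommGroup Y] [NormedSpace ℂ Y] [CompleteSpace Y]

set_option linter.unusedSectionVars false

lemma aux_cos_ne_zero (θ : ℝ) : ∀ᶠ θ' in 𝓝[≠] θ, Real.cos θ' ≠ 0 := by
  by_cases h : Real.cos θ = 0
  · obtain ⟨k, hk⟩ := Real.cos_eq_zero_iff.mp h
    have hball : Metric.ball θ Real.pi ∈ 𝓝[≠] θ :=
      mem_nhdsWithin_of_mem_nhds (Metric.ball_mem_nhds _ Real.pi_pos)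
    filter_upwards [self_mem_nhdsWithin, hball] with θ' hne hmem hcos
    obtain ⟨m, hm⟩ := Real.cos_eq_zero_iff.mp hcos
    have hdist : |θ' - θ| < Real.pi := by
      have := Metric.mem_ball.mp hmem
      rwa [Real.dist_eq] at this
    have heq : θ' - θ = (m - k : ℤ) * Real.pi := by
      rw [hk, hm]; push_cast; ring
    rcases eq_or_ne m k with rfl | hmk
    · exact hne (show θ' = θ by rw [hk, hm])
    · have h1 : (1:ℝ) ≤ |((m - k : ℤ) : ℝ)| := by
        exact_mod_cast Int.one_le_abs (sub_ne_zero.mpr hmk)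
      have : Real.pi ≤ |θ' - θ| := by
        rw [heq, abs_mul, abs_of_pos Real.pi_pos]
        nlinarith [Real.pi_pos]
      linarith
  · exact eventually_nhdsWithin_of_eventually_nhds
      (Real.continuous_cos.continuousAt.eventually_ne h)

lemma aux_sphere_bound {c : ℂ} (hc : c.re = 0) {t : ℝ} (ht : 0 < t) {h : ℂ → Y}
    (hcont : ContinuousOn h (sphere c t)) {C : ℝ}
    (hb : ∀ w ∈ sphere c t, w.re ≠ 0 → ‖h w‖ ≤ C) :
    ∀ z ∈ sphere c t, ‖h z‖ ≤ C := by
  intro z hz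
  have habs : ‖z - c‖ = t := by
    have := mem_sphere_iff_norm.mp hz
    simpa using this
  set θ : ℝ := (z - c).arg with hθ
  set m : ℝ → ℂ := fun θ' => c + (t : ℂ) * Complex.exp (θ' * Complex.I) with hm
  have hmz : m θ = z := by
    have := Complex.norm_mul_exp_arg_mul_I (z - c)
    rw [habs] at this
    simp only [hm]
    rw [this]; ring
  have hmem : ∀ θ', m θ' ∈ sphere c t := by
    intro θ'
    simp only [hm, mem_sphere_iff_norm, add_sub_cancel_left]
    rw [norm_mul]
    simp [Complex.norm_exp, abs_of_pos ht]
  have hre : ∀ θ', (m θ').re = t * Real.cos θ' := by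
    intro θ'
    simp only [hm, Complex.add_re, hc, Complex.mul_re, Complex.ofReal_re, Complex.ofReal_im]
    rw [show (θ' : ℂ) * Complex.I = ((θ' : ℝ) : ℂ) * Complex.I from rfl]
    rw [Complex.exp_ofReal_mul_I_re, Complex.exp_ofReal_mul_I_im]
    ring
  have htendm : Tendsto m (𝓝[≠] θ) (𝓝[sphere c t] z) := by
    apply tendsto_nhdsWithin_of_tendsto_nhds_of_eventually_within
    · have hcm : Continuous m := by continuity
      have := (hcm.tendsto θ).mono_left (nhdsWithin_le_nhds (s := {θ}ᶜ))
      rwa [hmz] at this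
    · exact Filter.Eventually.of_forall fun θ' => hmem θ'
  have hcw : Tendsto (fun θ' => ‖h (m θ')‖) (𝓝[≠] θ) (𝓝 ‖h z‖) :=
    ((hcont z hz).tendsto.comp htendm).norm
  refine le_of_tendsto hcw ?_
  filter_upwards [aux_cos_ne_zero θ] with θ' hθ'
  exact hb _ (hmem θ') (by rw [hre]; exact mul_ne_zero (ne_of_gt ht) hθ')

lemma aux_abs_sq_add {c : ℂ} (hc : c.re = 0) {t : ℝ} {z : ℂ}
    (h : ‖z - c‖ = t) :
    ‖(z - c) ^ 2 + (t : ℂ) ^ 2‖ = 2 * |z.re| * t := by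
  have h2 : ((t : ℂ)) ^ 2 = (z - c) * (starRingEnd ℂ) (z - c) := by
    rw [Complex.mul_conj, ← Complex.sq_norm, h]
    norm_cast
  have h3 : (z - c) ^ 2 + (t : ℂ) ^ 2 = (z - c) * (2 * (z.re : ℂ)) := by
    rw [h2, show (z - c) ^ 2 + (z - c) * (starRingEnd ℂ) (z - c)
        = (z - c) * ((z - c) + (starRingEnd ℂ) (z - c)) by ring, Complex.add_conj]
    have : (z - c).re = z.re := by simp [Complex.sub_re, hc]
    rw [this]; push_cast; ring
  rw [h3, norm_mul, h]
  have : ‖2 * (z.re : ℂ)‖ = 2 * |z.re| := by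
    rw [norm_mul]
    simp [Complex.norm_real, Real.norm_eq_abs]
  rw [this]; ring

lemma aux_pole_bound (n : ℕ) {f : ℂ → Y} {c : ℂ} (hc : c.re = 0) {r M : ℝ} (hr : 0 < r)
    (hf : DifferentiableOn ℂ f (ball c r \ {c}))
    (hb : ∀ lam ∈ ball c r \ {c}, lam.re ≠ 0 → ‖f lam‖ ≤ M / |lam.re| ^ (n + 1)) :
    ∃ C : ℝ, ∀ lam ∈ ball c (r / 4) \ {c}, ‖(lam - c) ^ (n + 1) • f lam‖ ≤ C := by
  have hρ : 0 < r / 2 := by positivity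
  set ρ : ℝ := r / 2 with hρdef
  set C₀ : ℝ := 4 ^ (n + 1) * |M| with hC₀def
  have hb' : ∀ lam ∈ ball c r \ {c}, lam.re ≠ 0 → ‖f lam‖ ≤ |M| / |lam.re| ^ (n + 1) := by
    intro lam hlam hre
    refine (hb lam hlam hre).trans ?_
    have h0 : (0:ℝ) < |lam.re| ^ (n + 1) := by positivity
    gcongr
    exact le_abs_self M
  set φ : ℝ → ℂ → ℂ := fun ε lam =>
    (lam - c) * (1 + (lam - c) ^ 2 / (ρ : ℂ) ^ 2) * (1 + (ε : ℂ) ^ 2 / (lam - c) ^ 2) with hφdef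
  have hφdiff : ∀ ε : ℝ, DifferentiableOn ℂ (fun lam => (φ ε lam) ^ (n + 1) • f lam)
      (ball c r \ {c}) := by
    intro ε
    apply DifferentiableOn.smul _ hf
    apply DifferentiableOn.pow
    apply DifferentiableOn.mul
    · apply DifferentiableOn.mul
      · exact (differentiable_id.sub_const c).differentiableOn
      · exact ((differentiable_const _).add
          (((differentiable_id.sub_const c).pow 2).div_const _)).differentiableOn
    · refine (differentiableOn_const _).add ?_
      refine DifferentiableOn.div (differentiableOn_const _)
        ((differentiable_id.sub_const c).pow 2).differentiableOn ?_
      intro z hz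
      refine pow_ne_zero _ (sub_ne_zero.mpr ?_)
      intro h; exact hz.2 (by simp [h])
  have habsφ : ∀ (ε : ℝ) (w : ℂ), ‖φ ε w‖ =
      ‖w - c‖ * ‖1 + (w - c) ^ 2 / (ρ : ℂ) ^ 2‖
        * ‖1 + (ε : ℂ) ^ 2 / (w - c) ^ 2‖ := by
    intro ε w; rw [hφdef]; simp [norm_mul]
  have hρC : ((ρ : ℝ) : ℂ) ≠ 0 := by exact_mod_cast ne_of_gt hρ
  have hAρ : ∀ w : ℂ, ‖w - c‖ = ρ →
      ‖1 + (w - c) ^ 2 / (ρ : ℂ) ^ 2‖ = 2 * |w.re| / ρ := by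
    intro w habs
    have key : (1 : ℂ) + (w - c) ^ 2 / (ρ : ℂ) ^ 2 = ((w - c) ^ 2 + (ρ : ℂ) ^ 2) / (ρ : ℂ) ^ 2 := by
      field_simp; ring
    rw [key, norm_div, aux_abs_sq_add hc habs]
    have h2 : ‖((ρ : ℝ) : ℂ) ^ 2‖ = ρ ^ 2 := by
      rw [norm_pow, Complex.norm_real, Real.norm_eq_abs, _root_.sq_abs]
    rw [h2]
    field_simp
  have hAε : ∀ (ε : ℝ), 0 < ε → ∀ w : ℂ, ‖w - c‖ = ε →
      ‖1 + (ε : ℂ) ^ 2 / (w - c) ^ 2‖ = 2 * |w.re| / ε := by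
    intro ε hε w habs
    have hwc : w - c ≠ 0 := by
      intro h; rw [h] at habs; simp at habs; exact (ne_of_gt hε) habs.symm
    have key : (1 : ℂ) + (ε : ℂ) ^ 2 / (w - c) ^ 2
        = ((w - c) ^ 2 + (ε : ℂ) ^ 2) / (w - c) ^ 2 := by
      field_simp
    rw [key, norm_div, aux_abs_sq_add hc habs, norm_pow, habs]
    field_simp
  have hB : ∀ (s t : ℝ), 0 ≤ s → 0 < t → s ≤ t → ∀ w : ℂ, ‖w - c‖ = t →
      ‖1 + (s : ℂ) ^ 2 / (w - c) ^ 2‖ ≤ 2 := by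
    intro s t hs ht hst w habs
    calc ‖1 + (s : ℂ) ^ 2 / (w - c) ^ 2‖
        ≤ ‖(1:ℂ)‖ + ‖(s : ℂ) ^ 2 / (w - c) ^ 2‖ := norm_add_le _ _
      _ = 1 + s ^ 2 / t ^ 2 := by
          rw [norm_div, norm_pow, norm_pow, habs, Complex.norm_real, Real.norm_eq_abs, norm_one, _root_.sq_abs]
      _ ≤ 1 + 1 := by
          have h2 : s ^ 2 / t ^ 2 ≤ 1 := by
            rw [div_le_one (by positivity)]; nlinarith
          linarith
      _ = 2 := by norm_num
  have hB' : ∀ (t : ℝ), 0 < t → t ≤ ρ → ∀ w : ℂ, ‖w - c‖ = t →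
      ‖1 + (w - c) ^ 2 / (ρ : ℂ) ^ 2‖ ≤ 2 := by
    intro t ht htρ w habs
    calc ‖1 + (w - c) ^ 2 / (ρ : ℂ) ^ 2‖
        ≤ ‖(1:ℂ)‖ + ‖(w - c) ^ 2 / (ρ : ℂ) ^ 2‖ := norm_add_le _ _
      _ = 1 + t ^ 2 / ρ ^ 2 := by
          rw [norm_div, norm_pow, norm_pow, habs, Complex.norm_real, Real.norm_eq_abs, norm_one, _root_.sq_abs]
      _ ≤ 1 + 1 := by
          have h2 : t ^ 2 / ρ ^ 2 ≤ 1 := by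
            rw [div_le_one (by positivity)]; nlinarith
          linarith
      _ = 2 := by norm_num
  have hnorm : ∀ (ε : ℝ) (w : ℂ),
      ‖(φ ε w) ^ (n + 1) • f w‖ = ‖φ ε w‖ ^ (n + 1) * ‖f w‖ := by
    intro ε w
    rw [norm_smul, norm_pow]
  have hsphsub : ∀ t : ℝ, 0 < t → t ≤ ρ → sphere c t ⊆ ball c r \ {c} := by
    intro t ht htρ w hw
    have habs : dist w c = t := mem_sphere_iff_norm.mp hw ▸ (by rw [Complex.dist_eq])
    constructor
    · rw [mem_ball, habs]; rw [hρdef] at htρ; linarith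
    · intro hwc
      rw [mem_singleton_iff] at hwc
      rw [hwc, dist_self] at habs
      exact (ne_of_gt ht) habs.symm
  have hsph : ∀ (ε : ℝ), 0 < ε → ε ≤ ρ → ∀ (t : ℝ), (t = ρ ∨ t = ε) →
      ∀ w ∈ sphere c t, w.re ≠ 0 → ‖(φ ε w) ^ (n + 1) • f w‖ ≤ C₀ := by
    intro ε hε hερ t htcase w hw hre
    have ht : 0 < t := by
      rcases htcase with h | h
      · rw [h]; exact hρ
      · rw [h]; exact hε
    have htρ : t ≤ ρ := by
      rcases htcase with h | h
      · rw [h]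
      · rw [h]; exact hερ
    have habs : ‖w - c‖ = t := by
      have := mem_sphere_iff_norm.mp hw
      simpa using this
    have hwmem : w ∈ ball c r \ {c} := hsphsub t ht htρ hw
    have hφbound : ‖φ ε w‖ ≤ 4 * |w.re| := by
      rcases htcase with h | h
      · have habs' : ‖w - c‖ = ρ := by rw [← h]; exact habs
        rw [habsφ, habs', hAρ w habs']
        have h3 := hB ε ρ (le_of_lt hε) hρ hερ w habs'
        calc ρ * (2 * |w.re| / ρ) * ‖1 + (ε : ℂ) ^ 2 / (w - c) ^ 2‖
            ≤ ρ * (2 * |w.re| / ρ) * 2 := by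
              apply mul_le_mul_of_nonneg_left h3; positivity
          _ = 4 * |w.re| := by field_simp; ring
      · have habs' : ‖w - c‖ = ε := by rw [← h]; exact habs
        rw [habsφ, habs', hAε ε hε w habs']
        have h3 := hB' ε hε hερ w habs'
        calc ε * ‖1 + (w - c) ^ 2 / (ρ : ℂ) ^ 2‖ * (2 * |w.re| / ε)
            ≤ ε * 2 * (2 * |w.re| / ε) := by
              apply mul_le_mul_of_nonneg_right _ (by positivity)
              apply mul_le_mul_of_nonneg_left h3 (le_of_lt hε)
          _ = 4 * |w.re| := by field_simp; ring
    rw [hnorm]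
    have hre' : (0:ℝ) < |w.re| := abs_pos.mpr hre
    calc ‖φ ε w‖ ^ (n + 1) * ‖f w‖
        ≤ (4 * |w.re|) ^ (n + 1) * (|M| / |w.re| ^ (n + 1)) := by
          apply mul_le_mul (pow_le_pow_left₀ (norm_nonneg _) hφbound _)
            (hb' w hwmem hre) (norm_nonneg _) (by positivity)
      _ = C₀ := by
          rw [mul_pow, hC₀def]
          field_simp
  have hmain : ∀ ε : ℝ, 0 < ε → ε < ρ →
      ∀ z ∈ closure (ball c ρ \ closedBall c ε), ‖(φ ε z) ^ (n + 1) • f z‖ ≤ C₀ := by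
    intro ε hε hερ z hz
    set U : Set ℂ := ball c ρ \ closedBall c ε with hUdef
    have hUb : Bornology.IsBounded U := isBounded_ball.subset diff_subset
    have hsub : closure U ⊆ ball c r \ {c} := by
      intro v hv
      have h1 : v ∈ closedBall c ρ := by
        have := closure_mono (diff_subset : U ⊆ ball c ρ) hv
        rwa [closure_ball c (ne_of_gt hρ)] at this
      have h2 : v ∉ ball c ε := by
        have hcl : closure U ⊆ (ball c ε)ᶜ := by
          apply closure_minimal _ (isClosed_compl_iff.mpr isOpen_ball)
          intro w hw hwball
          exact hw.2 (ball_subset_closedBall hwball)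
        exact hcl hv
      constructor
      · refine lt_of_le_of_lt (mem_closedBall.mp h1) ?_
        rw [hρdef]; linarith
      · intro hvc
        rw [mem_singleton_iff] at hvc
        exact h2 (by rw [hvc]; exact mem_ball_self hε)
    have hUsub : U ⊆ ball c r \ {c} := subset_trans subset_closure hsub
    have hdc : DiffContOnCl ℂ (fun lam => (φ ε lam) ^ (n + 1) • f lam) U :=
      ⟨(hφdiff ε).mono hUsub, ((hφdiff ε).continuousOn).mono hsub⟩
    have hfrsub : frontier U ⊆ sphere c ρ ∪ sphere c ε := by
      rw [hUdef, diff_eq]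
      refine subset_trans (frontier_inter_subset _ _) ?_
      intro w hw
      rcases hw with ⟨hw1, _⟩ | ⟨_, hw2⟩
      · left; rwa [frontier_ball c (ne_of_gt hρ)] at hw1
      · right; rwa [frontier_compl, frontier_closedBall c (ne_of_gt hε)] at hw2
    have hfr : ∀ w ∈ frontier U, ‖(φ ε w) ^ (n + 1) • f w‖ ≤ C₀ := by
      intro w hw
      rcases hfrsub hw with hwρ | hwε
      · exact aux_sphere_bound hc hρ
          (((hφdiff ε).continuousOn).mono (hsphsub ρ hρ le_rfl))
          (hsph ε hε (le_of_lt hερ) ρ (Or.inl rfl)) w hwρ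
      · exact aux_sphere_bound hc hε
          (((hφdiff ε).continuousOn).mono (hsphsub ε hε (le_of_lt hερ)))
          (hsph ε hε (le_of_lt hερ) ε (Or.inr rfl)) w hwε
    exact Complex.norm_le_of_forall_mem_frontier_norm_le hUb hdc hfr hz
  -- conclusion
  refine ⟨(16 / 9 : ℝ) ^ (n + 1) * C₀, ?_⟩
  intro lam hlam
  set t : ℝ := ‖lam - c‖ with htdef
  have hlamc : lam ≠ c := by
    intro h; exact hlam.2 (by rw [h]; exact mem_singleton c)
  have ht : 0 < t := by
    rw [htdef]
    exact norm_pos_iff.mpr (sub_ne_zero.mpr hlamc)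
  have htr : t < r / 4 := by
    have := mem_ball.mp hlam.1
    rwa [Complex.dist_eq] at this
  set ε : ℝ := t / 2 with hεdef
  have hε : 0 < ε := by positivity
  have hερ : ε < ρ := by rw [hεdef, hρdef]; linarith
  have hmem : lam ∈ closure (ball c ρ \ closedBall c ε) := by
    apply subset_closure
    constructor
    · rw [mem_ball, Complex.dist_eq, ← htdef, hρdef]; linarith
    · rw [mem_closedBall, Complex.dist_eq, ← htdef]
      intro h
      rw [hεdef] at h; linarith
  have hup := hmain ε hε hερ lam hmem
  -- lower bound on the weight
  have hlamC : lam - c ≠ 0 := sub_ne_zero.mpr hlamc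
  have hlow2 : (3/4 : ℝ) ≤ ‖1 + (lam - c) ^ 2 / (ρ : ℂ) ^ 2‖ := by
    set u : ℂ := (lam - c) ^ 2 / (ρ : ℂ) ^ 2 with hudef
    have h1 : ‖u‖ ≤ 1 / 4 := by
      rw [hudef, norm_div, norm_pow, norm_pow, ← htdef, Complex.norm_real, Real.norm_eq_abs,
        abs_of_pos hρ]
      rw [div_le_div_iff₀ (by positivity) (by norm_num)]
      rw [hρdef]; nlinarith
    have h2 : (1:ℝ) ≤ ‖1 + u‖ + ‖u‖ := by
      have := norm_add_le (1 + u) (-u)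
      simpa using this
    linarith
  have hlow3 : (3/4 : ℝ) ≤ ‖1 + (ε : ℂ) ^ 2 / (lam - c) ^ 2‖ := by
    set u : ℂ := (ε : ℂ) ^ 2 / (lam - c) ^ 2 with hudef
    have h1 : ‖u‖ ≤ 1 / 4 := by
      rw [hudef, norm_div, norm_pow, norm_pow, ← htdef, Complex.norm_real, Real.norm_eq_abs,
        abs_of_pos hε]
      rw [div_le_div_iff₀ (by positivity) (by norm_num)]
      rw [hεdef]; nlinarith
    have h2 : (1:ℝ) ≤ ‖1 + u‖ + ‖u‖ := by
      have := norm_add_le (1 + u) (-u)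
      simpa using this
    linarith
  have hφlow : (9/16 : ℝ) * t ≤ ‖φ ε lam‖ := by
    rw [habsφ, ← htdef]
    calc (9/16 : ℝ) * t = t * (3/4) * (3/4) := by ring
      _ ≤ t * ‖1 + (lam - c) ^ 2 / (ρ : ℂ) ^ 2‖
            * ‖1 + (ε : ℂ) ^ 2 / (lam - c) ^ 2‖ := by
          apply mul_le_mul _ hlow3 (by norm_num) (by positivity)
          apply mul_le_mul_of_nonneg_left hlow2 (le_of_lt ht)
  have hkey : ((9/16 : ℝ) * t) ^ (n + 1) * ‖f lam‖ ≤ C₀ := by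
    refine le_trans ?_ hup
    rw [hnorm]
    apply mul_le_mul_of_nonneg_right _ (norm_nonneg _)
    exact pow_le_pow_left₀ (by positivity) hφlow _
  have hEq : ‖(lam - c) ^ (n + 1) • f lam‖ = t ^ (n + 1) * ‖f lam‖ := by
    rw [norm_smul, norm_pow, ← htdef]
  rw [hEq]
  have hone : ((16:ℝ)/9) ^ (n+1) * ((9:ℝ)/16) ^ (n+1) = 1 := by
    rw [← mul_pow]; norm_num
  have hfinal : t ^ (n + 1) * ‖f lam‖
      = (16/9 : ℝ) ^ (n + 1) * (((9/16 : ℝ) * t) ^ (n + 1) * ‖f lam‖) := by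
    calc t ^ (n+1) * ‖f lam‖
        = (((16:ℝ)/9) ^ (n+1) * ((9:ℝ)/16) ^ (n+1)) * (t^(n+1) * ‖f lam‖) := by
          rw [hone, one_mul]
      _ = (16/9 : ℝ) ^ (n + 1) * (((9/16 : ℝ) * t) ^ (n + 1) * ‖f lam‖) := by
          rw [mul_pow]; ring
  rw [hfinal]
  apply mul_le_mul_of_nonneg_left hkey (by positivity)

lemma aux_strip {f g : ℂ → Y} {c : ℂ} {s : ℝ} (hs : 0 < s) (k : ℕ)
    (hg : DifferentiableOn ℂ g (ball c s))
    (heq : ∀ lam ∈ ball c s \ {c}, g lam = (lam - c) ^ (k + 1) • f lam)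
    (herg : Tendsto (fun α : ℝ => (α : ℂ) • f (c + α)) (𝓝[>] (0:ℝ)) (𝓝 0)) :
    ∃ g' : ℂ → Y, DifferentiableOn ℂ g' (ball c s) ∧
      ∀ lam ∈ ball c s \ {c}, g' lam = (lam - c) ^ k • f lam := by
  -- g c = 0
  have hmem : ∀ α : ℝ, 0 < α → α < s → c + (α:ℂ) ∈ ball c s \ {c} := by
    intro α h0 hαs
    constructor
    · rw [mem_ball, Complex.dist_eq]
      simp [Complex.norm_real, Real.norm_eq_abs, abs_of_pos h0, hαs]
    · intro h
      rw [mem_singleton_iff, add_eq_left] at h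
      norm_cast at h
      linarith
  have hgc0 : g c = 0 := by
    have h1 : Tendsto (fun α : ℝ => g (c + (α:ℂ))) (𝓝[>] (0:ℝ)) (𝓝 (g c)) := by
      have hgc : ContinuousAt g c :=
        (hg.differentiableAt ((isOpen_ball).mem_nhds (mem_ball_self hs))).continuousAt
      have hadd : Tendsto (fun α : ℝ => c + (α:ℂ)) (𝓝[>] (0:ℝ)) (𝓝 c) := by
        have : Tendsto (fun α : ℝ => c + (α:ℂ)) (𝓝 (0:ℝ)) (𝓝 (c + ((0:ℝ):ℂ))) := by
          apply Tendsto.const_add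
          exact Complex.continuous_ofReal.tendsto 0
        simpa using this.mono_left nhdsWithin_le_nhds
      exact hgc.tendsto.comp hadd
    have h2 : Tendsto (fun α : ℝ => g (c + (α:ℂ))) (𝓝[>] (0:ℝ)) (𝓝 0) := by
      have heq2 : ∀ᶠ α : ℝ in 𝓝[>] (0:ℝ),
          g (c + (α:ℂ)) = (α:ℂ) ^ k • ((α:ℂ) • f (c + (α:ℂ))) := by
        filter_upwards [self_mem_nhdsWithin,
          eventually_nhdsWithin_of_eventually_nhds
            (Filter.Tendsto.eventually_lt_const hs tendsto_id)] with α h0 hαs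
        rw [heq _ (hmem α h0 hαs)]
        rw [show c + (α:ℂ) - c = (α:ℂ) by ring, ← smul_assoc, smul_eq_mul, pow_succ]
      have h3 : Tendsto (fun α : ℝ => ((α:ℂ)) ^ k) (𝓝[>] (0:ℝ)) (𝓝 (((0:ℝ):ℂ) ^ k)) := by
        apply Tendsto.pow
        exact (Complex.continuous_ofReal.tendsto 0).mono_left nhdsWithin_le_nhds
      have h4 := h3.smul herg
      rw [smul_zero] at h4
      exact Tendsto.congr' (heq2.mono fun α hα => hα.symm) h4
    exact tendsto_nhds_unique h1 h2
  -- big-O bound near c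
  have hdiffc : DifferentiableAt ℂ g c :=
    hg.differentiableAt ((isOpen_ball).mem_nhds (mem_ball_self hs))
  have hO : (fun z => g z) =O[𝓝 c] fun z => z - c := by
    have := hdiffc.isBigO_sub
    simpa [hgc0] using this
  obtain ⟨C, hC⟩ := hO.isBigOWith
  rw [Asymptotics.isBigOWith_iff] at hC
  obtain ⟨t, ht, htball⟩ := Metric.eventually_nhds_iff_ball.mp hC
  set t' : ℝ := min t s with ht'def
  have ht' : 0 < t' := lt_min ht hs
  set g1 : ℂ → Y := fun z => (z - c)⁻¹ • g z with hg1def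
  have hg1diff : DifferentiableOn ℂ g1 (ball c t' \ {c}) := by
    apply DifferentiableOn.smul
    · apply DifferentiableOn.inv
      · exact (differentiable_id.sub_const c).differentiableOn
      · intro z hz
        exact sub_ne_zero.mpr (fun h => hz.2 (by simp [h]))
    · exact hg.mono (subset_trans diff_subset (ball_subset_ball (min_le_right t s)))
  have hg1bdd : BddAbove (norm ∘ g1 '' (ball c t' \ {c})) := by
    refine ⟨|C|, ?_⟩
    rintro y ⟨z, hz, rfl⟩
    have hzC : z - c ≠ 0 := sub_ne_zero.mpr (fun h => hz.2 (by simp [h]))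
    have hzb : z ∈ ball c t := ball_subset_ball (min_le_left t s) hz.1
    simp only [Function.comp_apply, hg1def]
    rw [norm_smul, norm_inv]
    have habs : 0 < ‖z - c‖ := norm_pos_iff.mpr hzC
    rw [inv_mul_le_iff₀ habs]
    have hb2 : ‖g z‖ ≤ C * ‖z - c‖ := by
      simpa using htball z hzb
    refine hb2.trans ?_
    rw [mul_comm]
    exact mul_le_mul_of_nonneg_left (le_abs_self C) (le_of_lt habs)
  have hremov := Complex.differentiableOn_update_limUnder_of_bddAbove
    ((isOpen_ball).mem_nhds (mem_ball_self ht')) hg1diff hg1bdd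
  set g' : ℂ → Y := Function.update g1 c (limUnder (𝓝[≠] c) g1) with hg'def
  refine ⟨g', ?_, ?_⟩
  · intro z hz
    by_cases hzt : z ∈ ball c t'
    · exact ((hremov.differentiableAt ((isOpen_ball).mem_nhds hzt)).differentiableWithinAt)
    · have hzc : z ≠ c := fun h => hzt (by rw [h]; exact mem_ball_self ht')
      have hdAt : DifferentiableAt ℂ g1 z := by
        apply DifferentiableAt.smul
        · apply DifferentiableAt.inv
          · exact differentiable_id.sub_const c |>.differentiableAt
          · exact sub_ne_zero.mpr hzc
        · exact hg.differentiableAt ((isOpen_ball).mem_nhds hz)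
      have hevz : g' =ᶠ[𝓝 z] g1 := by
        filter_upwards [isOpen_ne.mem_nhds (show z ≠ c from hzc)] with w hw
        rw [hg'def, Function.update_of_ne hw]
      exact (hdAt.congr_of_eventuallyEq hevz).differentiableWithinAt
  · intro lam hlam
    have hlamc : lam ≠ c := fun h => hlam.2 (by simp [h])
    have hne : lam - c ≠ 0 := sub_ne_zero.mpr hlamc
    rw [hg'def, Function.update_of_ne hlamc]
    show (lam - c)⁻¹ • g lam = _
    rw [heq lam hlam, ← smul_assoc, smul_eq_mul, pow_succ]
    congr 1
    field_simp

lemma aux_extend (n : ℕ) {f : ℂ → Y} {c : ℂ} (hc : c.re = 0) {r M : ℝ} (hr : 0 < r)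
    (hf : DifferentiableOn ℂ f (ball c r \ {c}))
    (hb : ∀ lam ∈ ball c r \ {c}, lam.re ≠ 0 → ‖f lam‖ ≤ M / |lam.re| ^ (n + 1))
    (herg : Tendsto (fun α : ℝ => (α : ℂ) • f (c + α)) (𝓝[>] (0:ℝ)) (𝓝 0)) :
    ∃ s > (0:ℝ), ∃ g : ℂ → Y, DifferentiableOn ℂ g (ball c s) ∧
      ∀ lam ∈ ball c s \ {c}, g lam = f lam := by
  obtain ⟨C, hC⟩ := aux_pole_bound n hc hr hf hb
  set s : ℝ := r / 4 with hsdef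
  have hs : 0 < s := by positivity
  have hsub : ball c s \ {c} ⊆ ball c r \ {c} := by
    apply diff_subset_diff_left
    apply ball_subset_ball
    linarith
  set g0 : ℂ → Y := fun lam => (lam - c) ^ (n + 1) • f lam with hg0def
  have hg0diff : DifferentiableOn ℂ g0 (ball c s \ {c}) := by
    apply DifferentiableOn.smul
    · exact ((differentiable_id.sub_const c).pow (n+1)).differentiableOn
    · exact hf.mono hsub
  have hg0bdd : BddAbove (norm ∘ g0 '' (ball c s \ {c})) := by
    refine ⟨C, ?_⟩
    rintro y ⟨z, hz, rfl⟩
    exact hC z hz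
  have hremov := Complex.differentiableOn_update_limUnder_of_bddAbove
    ((isOpen_ball).mem_nhds (mem_ball_self hs)) hg0diff hg0bdd
  set G0 : ℂ → Y := Function.update g0 c (limUnder (𝓝[≠] c) g0) with hG0def
  have hG0eq : ∀ lam ∈ ball c s \ {c}, G0 lam = (lam - c) ^ (n + 1) • f lam := by
    intro lam hlam
    have hlamc : lam ≠ c := fun h => hlam.2 (by simp [h])
    rw [hG0def, Function.update_of_ne hlamc]
  -- iterate stripping
  have hiter : ∀ m : ℕ, m ≤ n + 1 → ∃ g : ℂ → Y, DifferentiableOn ℂ g (ball c s) ∧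
      ∀ lam ∈ ball c s \ {c}, g lam = (lam - c) ^ (n + 1 - m) • f lam := by
    intro m
    induction m with
    | zero => intro _; exact ⟨G0, hremov, by simpa using hG0eq⟩
    | succ m ih =>
      intro hm
      obtain ⟨g, hgdiff, hgeq⟩ := ih (le_of_lt (Nat.lt_of_succ_le hm))
      have hk : n + 1 - m = (n + 1 - (m + 1)) + 1 := by omega
      obtain ⟨g', hg'diff, hg'eq⟩ := aux_strip hs (n + 1 - (m + 1)) hgdiff
        (by intro lam hlam; rw [hgeq lam hlam, hk]) herg
      exact ⟨g', hg'diff, hg'eq⟩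
  obtain ⟨g, hgdiff, hgeq⟩ := hiter (n + 1) le_rfl
  refine ⟨s, hs, g, hgdiff, ?_⟩
  intro lam hlam
  rw [hgeq lam hlam]
  simp

lemma aux_off_axis {V : Set ℂ} (hV : IsOpen V) {z : ℂ} (hz : z ∈ V) :
    ∃ w ∈ V, w.re ≠ 0 := by
  by_cases hre : z.re ≠ 0
  · exact ⟨z, hz, hre⟩
  push_neg at hre
  obtain ⟨δ, hδ, hball⟩ := Metric.isOpen_iff.mp hV z hz
  refine ⟨z + (δ/2 : ℝ), hball ?_, ?_⟩
  · rw [mem_ball, Complex.dist_eq]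
    simp only [add_sub_cancel_left]
    rw [Complex.norm_real, Real.norm_eq_abs, abs_of_pos (by positivity)]
    linarith
  · simp only [Complex.add_re, hre, Complex.ofReal_re, zero_add]
    positivity

lemma aux_unique {u g1 g2 : ℂ → Y} {c1 c2 : ℂ} {r1 r2 : ℝ}
    (h1 : DifferentiableOn ℂ g1 (ball c1 r1)) (h2 : DifferentiableOn ℂ g2 (ball c2 r2))
    (e1 : ∀ lam ∈ ball c1 r1, lam.re ≠ 0 → g1 lam = u lam)
    (e2 : ∀ lam ∈ ball c2 r2, lam.re ≠ 0 → g2 lam = u lam)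
    {z : ℂ} (hz : z ∈ ball c1 r1 ∩ ball c2 r2) : g1 z = g2 z := by
  set V : Set ℂ := ball c1 r1 ∩ ball c2 r2 with hVdef
  have hVopen : IsOpen V := isOpen_ball.inter isOpen_ball
  have hVpre : IsPreconnected V :=
    ((convex_ball c1 r1).inter (convex_ball c2 r2)).isPreconnected
  obtain ⟨w, hwV, hwre⟩ := aux_off_axis hVopen hz
  have hA1 : AnalyticOnNhd ℂ g1 V := fun z hz => (h1.analyticOnNhd isOpen_ball) z hz.1
  have hA2 : AnalyticOnNhd ℂ g2 V := fun z hz => (h2.analyticOnNhd isOpen_ball) z hz.2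
  have hev : g1 =ᶠ[𝓝 w] g2 := by
    have haxis : IsOpen {lam : ℂ | lam.re ≠ 0} := by
      have : {lam : ℂ | lam.re ≠ 0} = Complex.re ⁻¹' {(0:ℝ)}ᶜ := by
        ext lam; simp [Set.mem_preimage]
      rw [this]
      exact (isOpen_compl_singleton).preimage Complex.continuous_re
    have hopen : IsOpen (V ∩ {lam : ℂ | lam.re ≠ 0}) := hVopen.inter haxis
    filter_upwards [hopen.mem_nhds ⟨hwV, hwre⟩] with v hv
    rw [e1 v hv.1.1 hv.2, e2 v hv.1.2 hv.2]
  exact hA1.eqOn_of_preconnected_of_eventuallyEq hA2 hVpre hwV hev hz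

lemma aux_axis_open : IsOpen {lam : ℂ | lam.re ≠ 0} := by
  have : {lam : ℂ | lam.re ≠ 0} = Complex.re ⁻¹' {(0:ℝ)}ᶜ := by
    ext lam; simp [Set.mem_preimage]
  rw [this]
  exact (isOpen_compl_singleton).preimage Complex.continuous_re

lemma aux_axis_eq {lam : ℂ} (h : lam.re = 0) : Complex.I * lam.im = lam := by
  apply Complex.ext <;> simp [h]

lemma aux_glue {u : ℂ → Y} (hu : DifferentiableOn ℂ u {lam : ℂ | lam.re ≠ 0})
    (P : ℝ → Prop) (rr : ℝ → ℝ) (gg : ℝ → ℂ → Y)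
    (hgg : ∀ ξ : ℝ, P ξ → 0 < rr ξ ∧
      DifferentiableOn ℂ (gg ξ) (ball (Complex.I * ξ) (rr ξ)) ∧
      ∀ lam ∈ ball (Complex.I * ξ) (rr ξ), lam.re ≠ 0 → gg ξ lam = u lam)
    {V : Set ℂ} (hV : IsOpen V) (hP : ∀ lam ∈ V, lam.re = 0 → P lam.im) :
    ∃ F : ℂ → Y, DifferentiableOn ℂ F V ∧ ∀ lam ∈ V, lam.re ≠ 0 → F lam = u lam := by
  classical
  set F : ℂ → Y := fun lam => if lam.re = 0 then gg lam.im lam else u lam with hFdef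
  have hFoff : ∀ lam : ℂ, lam.re ≠ 0 → F lam = u lam := by
    intro lam h; rw [hFdef]; simp [h]
  refine ⟨F, ?_, fun lam _ h => hFoff lam h⟩
  intro z hz
  by_cases hre : z.re = 0
  · have hPz := hP z hz hre
    obtain ⟨hr, hgd, hge⟩ := hgg z.im hPz
    have hcz : Complex.I * (z.im : ℂ) = z := aux_axis_eq hre
    have hzb : z ∈ ball (Complex.I * (z.im : ℂ)) (rr z.im) := by
      rw [hcz]; exact mem_ball_self hr
    obtain ⟨t, ht, hball⟩ := Metric.mem_nhds_iff.mp
      ((hV.inter isOpen_ball).mem_nhds ⟨hz, hzb⟩)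
    have heqF : ∀ w ∈ ball z t, F w = gg z.im w := by
      intro w hw
      obtain ⟨hwV, hwb⟩ := hball hw
      by_cases hwre : w.re = 0
      · have hPw := hP w hwV hwre
        obtain ⟨hrw, hgdw, hgew⟩ := hgg w.im hPw
        have hcw : Complex.I * (w.im : ℂ) = w := aux_axis_eq hwre
        have : F w = gg w.im w := by rw [hFdef]; simp [hwre]
        rw [this]
        exact aux_unique hgdw hgd hgew hge
          ⟨by rw [hcw]; exact mem_ball_self hrw, hwb⟩
      · rw [hFoff w hwre]
        exact (hge w hwb hwre).symm
    have hgdz : DifferentiableAt ℂ (gg z.im) z :=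
      hgd.differentiableAt (isOpen_ball.mem_nhds hzb)
    have hev : F =ᶠ[𝓝 z] gg z.im := by
      filter_upwards [isOpen_ball.mem_nhds (mem_ball_self ht)] with w hw
      exact heqF w hw
    exact (hgdz.congr_of_eventuallyEq hev).differentiableWithinAt
  · have hev : F =ᶠ[𝓝 z] u := by
      filter_upwards [aux_axis_open.mem_nhds hre] with w hw
      exact hFoff w hw
    have hud : DifferentiableAt ℂ u z := hu.differentiableAt (aux_axis_open.mem_nhds hre)
    exact (hud.congr_of_eventuallyEq hev).differentiableWithinAt

lemma aux_perfect_empty {S : Set ℝ} (hclosed : IsClosed S) (hcount : S.Countable)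
    (hacc : ∀ x ∈ S, AccPt x (𝓟 S)) : S = ∅ := by
  by_contra h
  obtain ⟨x, hx⟩ := nonempty_iff_ne_empty.mpr h
  have hperf : Perfect S := ⟨hclosed, hacc⟩
  obtain ⟨f, hrange, _, hinj⟩ := hperf.exists_nat_bool_injection ⟨x, hx⟩
  have hcr : (Set.range f).Countable := hcount.mono hrange
  have hcnt : Countable (ℕ → Bool) := by
    have := hcr.to_subtype
    exact Countable.of_equiv _ (Equiv.ofInjective f hinj).symm
  obtain ⟨g, hginj⟩ := (countable_iff_exists_injective (ℕ → Bool)).mp hcnt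
  have e : (Set ℕ) ≃ (ℕ → Bool) := Equiv.arrowCongr (Equiv.refl ℕ) Equiv.propEquivBool
  exact Function.cantor_injective (fun s => g (e s)) (hginj.comp e.injective)

end AuxiliaryLemmas


/-- let `D` be a closed operator on a Banach space `Y` with resolvent
family `R` defined off the imaginary axis, and `x ∈ Y`. Suppose `u(λ) = R(λ)x`
(analytic off `iℝ`) extends analytically across every point `iξ` of `iℝ` with
`ξ ∉ E`, where `E ⊆ ℝ` is countable and closed; at each `η ∈ E` the ergodic condition
`α R(α + iη)x → 0` as `α ↓ 0` holds; and `‖R(λ)x‖ ≤ M/|Re λ|^{n+1}` near `iℝ`.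
Then `λ ↦ R(λ)x` extends to an entire function. -/
theorem resolvent_entire_extension
    {Y : Type*} [NormedAddCommGroup Y] [NormedSpace ℂ Y] [CompleteSpace Y]
    (D : Y →ₗ[ℂ] Y) (hclosed : IsClosed {p : Y × Y | D p.1 = p.2})
    (R : ℂ → Y →L[ℂ] Y)
    (hres : ∀ lam : ℂ, lam.re ≠ 0 → ∀ y : Y,
      lam • R lam y - D (R lam y) = y ∧ R lam (lam • y - D y) = y)
    (x : Y) (n : ℕ) (M : ℝ)
    (hanal : DifferentiableOn ℂ (fun lam => R lam x) {lam : ℂ | lam.re ≠ 0})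
    (E : Set ℝ) (hEcount : E.Countable) (hEclosed : IsClosed E)
    (hext : ∀ ξ : ℝ, ξ ∉ E → ∃ r > (0 : ℝ), ∃ g : ℂ → Y,
      DifferentiableOn ℂ g (Metric.ball (Complex.I * ξ) r) ∧
      ∀ lam ∈ Metric.ball (Complex.I * ξ) r, lam.re ≠ 0 → g lam = R lam x)
    (hergodic : ∀ η ∈ E,
      Tendsto (fun α : ℝ => (α : ℂ) • R ((α : ℂ) + Complex.I * η) x)
        (𝓝[>] 0) (𝓝 0))
    (hbound : ∀ lam : ℂ, lam.re ≠ 0 → |lam.re| < 1 →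
      ‖R lam x‖ ≤ M / |lam.re| ^ (n + 1)) :
    ∃ F : ℂ → Y, Differentiable ℂ F ∧ ∀ lam : ℂ, lam.re ≠ 0 → F lam = R lam x := by

  classical
  -- the extendability predicate
  set Ext : ℝ → Prop := fun ξ => ∃ r > (0 : ℝ), ∃ g : ℂ → Y,
      DifferentiableOn ℂ g (Metric.ball (Complex.I * ξ) r) ∧
      ∀ lam ∈ Metric.ball (Complex.I * ξ) r, lam.re ≠ 0 → g lam = R lam x with hExtdef
  set S : Set ℝ := {ξ : ℝ | ¬ Ext ξ} with hSdef
  have hSE : S ⊆ E := by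
    intro ξ hξ
    by_contra hE
    exact hξ (hext ξ hE)
  -- choice of local extensions
  have h' : ∀ ξ : ℝ, ∃ r : ℝ, ∃ g : ℂ → Y, Ext ξ →
      (0 < r ∧ DifferentiableOn ℂ g (Metric.ball (Complex.I * ξ) r) ∧
        ∀ lam ∈ Metric.ball (Complex.I * ξ) r, lam.re ≠ 0 → g lam = R lam x) := by
    intro ξ
    by_cases h : Ext ξ
    · obtain ⟨r, hr, g, hg1, hg2⟩ := h
      exact ⟨r, g, fun _ => ⟨hr, hg1, hg2⟩⟩
    · exact ⟨1, fun _ => 0, fun hc => absurd hc h⟩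
  choose rr gg hgg using h'
  have hdistI : ∀ a b : ℝ, dist (Complex.I * (a:ℂ)) (Complex.I * (b:ℂ)) = dist a b := by
    intro a b
    rw [Complex.dist_eq, Real.dist_eq]
    rw [show Complex.I * (a:ℂ) - Complex.I * (b:ℂ) = Complex.I * ((a:ℂ) - (b:ℂ)) by ring]
    rw [norm_mul, Complex.norm_I, one_mul, ← Complex.ofReal_sub, Complex.norm_real, Real.norm_eq_abs]
  -- S is closed
  have hSclosed : IsClosed S := by
    rw [hSdef, show {ξ : ℝ | ¬ Ext ξ} = {ξ : ℝ | Ext ξ}ᶜ from rfl]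
    rw [isClosed_compl_iff]
    rw [Metric.isOpen_iff]
    intro ξ hξ
    obtain ⟨r, hr, g, hg1, hg2⟩ := hξ
    refine ⟨r / 2, by positivity, ?_⟩
    intro ξ' hξ'
    have hsub : Metric.ball (Complex.I * (ξ':ℂ)) (r/2) ⊆ Metric.ball (Complex.I * (ξ:ℂ)) r := by
      intro w hw
      rw [mem_ball] at hw ⊢
      calc dist w (Complex.I * (ξ:ℂ))
          ≤ dist w (Complex.I * (ξ':ℂ)) + dist (Complex.I * (ξ':ℂ)) (Complex.I * (ξ:ℂ)) :=
            dist_triangle _ _ _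
        _ < r/2 + r/2 := by
            apply add_lt_add hw
            rw [hdistI]
            exact hξ'
        _ = r := by ring
    exact ⟨r/2, by positivity, g, hg1.mono hsub, fun lam hlam h => hg2 lam (hsub hlam) h⟩
  -- no isolated points in S
  have hacc : ∀ ξ₀ ∈ S, AccPt ξ₀ (𝓟 S) := by
    intro ξ₀ hξ₀
    by_contra hnacc
    rw [accPt_iff_nhds] at hnacc
    push_neg at hnacc
    obtain ⟨U, hU, hUiso⟩ := hnacc
    obtain ⟨δ₀, hδ₀, hballU⟩ := Metric.mem_nhds_iff.mp hU
    set c : ℂ := Complex.I * (ξ₀ : ℂ) with hcdef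
    have hcre : c.re = 0 := by simp [hcdef]
    set ρ : ℝ := min δ₀ 1 with hρdef
    have hρ : 0 < ρ := lt_min hδ₀ one_pos
    set V : Set ℂ := Metric.ball c ρ \ {c} with hVdef
    have hVopen : IsOpen V := isOpen_ball.sdiff isClosed_singleton
    have hP : ∀ lam ∈ V, lam.re = 0 → Ext lam.im := by
      intro lam hlam hre
      have hclam : Complex.I * (lam.im : ℂ) = lam := aux_axis_eq hre
      have hmem : lam.im ∈ Metric.ball ξ₀ δ₀ := by
        rw [mem_ball, ← hdistI lam.im ξ₀, hclam, ← hcdef]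
        exact lt_of_lt_of_le (mem_ball.mp hlam.1) (min_le_left _ _)
      by_contra hnext
      have : lam.im ∈ S := hnext
      have := hUiso lam.im ⟨hballU hmem, this⟩
      apply hlam.2
      rw [mem_singleton_iff, ← hclam, this, hcdef]
    obtain ⟨F, hFdiff, hFeq⟩ := aux_glue hanal Ext rr gg
      (fun ξ h => hgg ξ h) hVopen hP
    have hFbound : ∀ lam ∈ Metric.ball c ρ \ {c}, lam.re ≠ 0 →
        ‖F lam‖ ≤ M / |lam.re| ^ (n + 1) := by
      intro lam hlam hre
      rw [hFeq lam hlam hre]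
      apply hbound lam hre
      calc |lam.re| = |(lam - c).re| := by rw [Complex.sub_re, hcre, sub_zero]
        _ ≤ ‖lam - c‖ := Complex.abs_re_le_norm _
        _ < ρ := by rw [← Complex.dist_eq]; exact mem_ball.mp hlam.1
        _ ≤ 1 := min_le_right _ _
    have hFerg : Tendsto (fun α : ℝ => (α : ℂ) • F (c + α)) (𝓝[>] (0:ℝ)) (𝓝 0) := by
      have herg0 := hergodic ξ₀ (hSE hξ₀)
      apply Tendsto.congr' _ herg0
      filter_upwards [self_mem_nhdsWithin,
        eventually_nhdsWithin_of_eventually_nhds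
          (Filter.Tendsto.eventually_lt_const hρ tendsto_id)] with α h0 hαρ
      have h0' : (0:ℝ) < α := h0
      have hmem : c + (α:ℂ) ∈ V := by
        constructor
        · rw [mem_ball, Complex.dist_eq]
          simp only [add_sub_cancel_left]
          rw [Complex.norm_real, Real.norm_eq_abs, abs_of_pos h0']
          exact hαρ
        · intro h
          rw [mem_singleton_iff, add_eq_left] at h
          norm_cast at h
          linarith
      have hre : (c + (α:ℂ)).re ≠ 0 := by
        rw [Complex.add_re, hcre, zero_add, Complex.ofReal_re]
        exact ne_of_gt h0'
      rw [show (α:ℂ) + Complex.I * (ξ₀:ℂ) = c + (α:ℂ) by rw [hcdef]; ring]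
      rw [← hFeq _ hmem hre]
    obtain ⟨s, hs, g, hgdiff, hgeq⟩ :=
      aux_extend n hcre hρ hFdiff hFbound hFerg
    apply hξ₀
    rw [hSdef] at hξ₀
    refine ⟨min s ρ, lt_min hs hρ, g, hgdiff.mono (ball_subset_ball (min_le_left _ _)), ?_⟩
    intro lam hlam hre
    have hlamc : lam ≠ c := by
      intro h
      rw [h, hcre] at hre
      exact hre rfl
    have hmem1 : lam ∈ Metric.ball c s \ {c} :=
      ⟨ball_subset_ball (min_le_left _ _) hlam, hlamc⟩
    have hmem2 : lam ∈ V :=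
      ⟨ball_subset_ball (min_le_right _ _) hlam, hlamc⟩
    rw [hgeq lam hmem1, hFeq lam hmem2 hre]
  -- S is empty
  have hSempty : S = ∅ := aux_perfect_empty hSclosed (hEcount.mono hSE) hacc
  have hallExt : ∀ ξ : ℝ, Ext ξ := by
    intro ξ
    by_contra h
    have : ξ ∈ S := h
    rw [hSempty] at this
    exact this
  -- global gluing
  obtain ⟨F, hFdiff, hFeq⟩ := aux_glue hanal Ext rr gg
    (fun ξ h => hgg ξ h) isOpen_univ (fun lam _ _ => hallExt lam.im)
  exact ⟨F, differentiableOn_univ.mp hFdiff, fun lam h => hFeq lam (mem_univ lam) h⟩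
end
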